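/- The assignments X ↦ O_X on objects and [M, U_M] ↦ [M ⊗_B O_Y] on morphisms (where M ⊗_B O_Y is viewed as an O_X–O_Y correspondence via the homomorphism σ : O_X → K(M ⊗_B O_Y) induced by the C-covariant representation) define a functor E from the category ECCor to the enchilada category. In particular, for morphisms [M, U_M] : X → Y and [N, U_N] : Y → Z in ECCor there is an isomorphism of O_X–O_Z correspondences (M ⊗_B O_Y) ⊗_{O_Y} (N ⊗_C O_Z) ≅ (M ⊗_B N) ⊗_C O_Z, and E sends the identity morphism [A, U_A] on X to the class of the identity correspondence O_X. -/

import Mathlib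

/-!  Common framework: C*-correspondences, tensor products, representations,
Cuntz–Pimsner algebras, and the category `ECCor`, axiomatised as structures. -/

noncomputable section

universe u

/-- The closed linear span of a subset of a topological `ℂ`-module. -/
def clspan {V : Type*} [AddCommMonoid V] [Module ℂ V] [TopologicalSpace V] (s : Set V) : Set V :=
  closure ((Submodule.span ℂ s : Submodule ℂ V) : Set V)

/-- A (nondegenerate) C*-correspondence from `A` to `B`: a right Hilbert `B`-module `X`
equipped with a left action of `A` by adjointable operators, such that `A · X` is dense. -/
structure Corr (A : Type u) (B : Type u)
    [NonUnitalCStarAlgebra A] [NonUnitalCStarAlgebra B] : Type (u + 1) where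
  /-- the underlying module -/
  X : Type u
  [nacg : NormedAddCommGroup X]
  [nsp : NormedSpace ℂ X]
  [cs : CompleteSpace X]
  /-- the `B`-valued inner product `⟨·,·⟩_B` -/
  ip : X → X → B
  /-- the right action of `B` -/
  sm : X → B → X
  /-- the left action of `A` -/
  la : A → X → X
  sm_add : ∀ (x y : X) (b : B), sm (x + y) b = sm x b + sm y b
  sm_add' : ∀ (x : X) (b c : B), sm x (b + c) = sm x b + sm x c
  sm_mul : ∀ (x : X) (b c : B), sm (sm x b) c = sm x (b * c)
  sm_smul : ∀ (z : ℂ) (x : X) (b : B), sm (z • x) b = z • sm x b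
  sm_smul' : ∀ (z : ℂ) (x : X) (b : B), sm x (z • b) = z • sm x b
  sm_bound : ∀ (x : X) (b : B), ‖sm x b‖ ≤ ‖x‖ * ‖b‖
  ip_add : ∀ (x y z : X), ip x (y + z) = ip x y + ip x z
  ip_smul : ∀ (z : ℂ) (x y : X), ip x (z • y) = z • ip x y
  ip_star : ∀ (x y : X), star (ip x y) = ip y x
  ip_sm : ∀ (x y : X) (b : B), ip x (sm y b) = ip x y * b
  ip_pos : ∀ x : X, ∃ b : B, ip x x = star b * b
  ip_norm : ∀ x : X, ‖x‖ ^ 2 = ‖ip x x‖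
  ip_bound : ∀ x y : X, ‖ip x y‖ ≤ ‖x‖ * ‖y‖
  la_add : ∀ (a : A) (x y : X), la a (x + y) = la a x + la a y
  la_smul : ∀ (a : A) (z : ℂ) (x : X), la a (z • x) = z • la a x
  la_add' : ∀ (a b : A) (x : X), la (a + b) x = la a x + la b x
  la_mul : ∀ (a b : A) (x : X), la (a * b) x = la a (la b x)
  la_smul' : ∀ (z : ℂ) (a : A) (x : X), la (z • a) x = z • la a x
  la_adj : ∀ (a : A) (x y : X), ip (la a x) y = ip x (la (star a) y)
  la_bound : ∀ (a : A) (x : X), ‖la a x‖ ≤ ‖a‖ * ‖x‖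
  la_sm : ∀ (a : A) (x : X) (b : B), la a (sm x b) = sm (la a x) b
  /-- nondegeneracy: `A · X` is dense in `X` -/
  nondeg : clspan {y : X | ∃ (a : A) (x : X), y = la a x} = Set.univ

attribute [instance] Corr.nacg Corr.nsp Corr.cs

namespace Corr

variable {A B : Type u} [NonUnitalCStarAlgebra A] [NonUnitalCStarAlgebra B]

/-- The left action, as a continuous linear operator. -/
def lmul (E : Corr A B) (a : A) : E.X →L[ℂ] E.X :=
  LinearMap.mkContinuous
    { toFun := E.la a
      map_add' := E.la_add a
      map_smul' := fun z x => E.la_smul a z x }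
    ‖a‖ (E.la_bound a)

/-- The rank-one operator `θ_{x,y} : z ↦ x · ⟨y, z⟩_B`. -/
def rankOne (E : Corr A B) (x y : E.X) : E.X →L[ℂ] E.X :=
  LinearMap.mkContinuous
    { toFun := fun z => E.sm x (E.ip y z)
      map_add' := fun u v => by
        show E.sm x (E.ip y (u + v)) = E.sm x (E.ip y u) + E.sm x (E.ip y v)
        rw [E.ip_add, E.sm_add']
      map_smul' := fun c u => by
        show E.sm x (E.ip y (c • u)) = c • E.sm x (E.ip y u)
        rw [E.ip_smul, E.sm_smul'] }
    (‖x‖ * ‖y‖)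
    (fun z => by
      calc ‖E.sm x (E.ip y z)‖ ≤ ‖x‖ * ‖E.ip y z‖ := E.sm_bound _ _
        _ ≤ ‖x‖ * (‖y‖ * ‖z‖) :=
            mul_le_mul_of_nonneg_left (E.ip_bound y z) (norm_nonneg x)
        _ = ‖x‖ * ‖y‖ * ‖z‖ := (mul_assoc _ _ _).symm)

/-- The compact operators `K(X)`: the closed linear span of the rank-one operators. -/
def compacts (E : Corr A B) : Set (E.X →L[ℂ] E.X) :=
  clspan (Set.range fun p : E.X × E.X => E.rankOne p.1 p.2)

/-- A correspondence is injective if its left action is injective. -/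
def Injective (E : Corr A B) : Prop := Function.Injective E.lmul

/-- A correspondence is regular if its left action is injective with values in the compacts. -/
def Regular (E : Corr A B) : Prop :=
  Function.Injective E.lmul ∧ ∀ a : A, E.lmul a ∈ E.compacts

/-- Katsura's ideal `J_X = φ_X⁻¹(K(X)) ∩ (ker φ_X)^⊥` of a correspondence over `A`. -/
def katsuraIdeal {A : Type u} [NonUnitalCStarAlgebra A] (E : Corr A A) : Set A :=
  {a : A | E.lmul a ∈ E.compacts ∧ ∀ b : A, E.lmul b = 0 → a * b = 0}

/-- The closed submodule `M · J` of `M` determined by a subset `J ⊆ B`. -/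
def smSet (M : Corr A B) (J : Set B) : Set M.X :=
  clspan {ξ : M.X | ∃ (m : M.X) (b : B), b ∈ J ∧ ξ = M.sm m b}

/-- A pair of operators on a correspondence which are adjoint to each other. -/
def IsAdjointPair (W : Corr A B) (T S : W.X →L[ℂ] W.X) : Prop :=
  ∀ ξ η : W.X, W.ip (T ξ) η = W.ip ξ (S η)

end Corr

/-- The condition `J_X · M ⊆ M · J_Y` on an `A–B` correspondence `M`,
relative to correspondences `X` over `A` and `Y` over `B`. -/
def KatsuraCompat {A B : Type u} [NonUnitalCStarAlgebra A] [NonUnitalCStarAlgebra B]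
    (E : Corr A A) (M : Corr A B) (F : Corr B B) : Prop :=
  ∀ a ∈ E.katsuraIdeal, ∀ m : M.X, M.la a m ∈ M.smSet F.katsuraIdeal

/-- An isomorphism of `A–B` correspondences. -/
structure CorrIso {A B : Type u} [NonUnitalCStarAlgebra A] [NonUnitalCStarAlgebra B]
    (E F : Corr A B) where
  toFun : E.X → F.X
  invFun : F.X → E.X
  left_inv : Function.LeftInverse invFun toFun
  right_inv : Function.RightInverse invFun toFun
  map_add : ∀ x y : E.X, toFun (x + y) = toFun x + toFun y
  map_smul : ∀ (c : ℂ) (x : E.X), toFun (c • x) = c • toFun x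
  map_la : ∀ (a : A) (x : E.X), toFun (E.la a x) = F.la a (toFun x)
  map_ip : ∀ x y : E.X, F.ip (toFun x) (toFun y) = E.ip x y

/-- Witness that the correspondence `T` *is* the balanced tensor product `E ⊗_B F`,
via the bilinear map `mk2 : (x, y) ↦ x ⊗ y`. -/
structure TensorData {A B C : Type u} [NonUnitalCStarAlgebra A] [NonUnitalCStarAlgebra B]
    [NonUnitalCStarAlgebra C] (E : Corr A B) (F : Corr B C) (T : Corr A C) where
  mk2 : E.X → F.X → T.X
  add_l : ∀ (x x' : E.X) (y : F.X), mk2 (x + x') y = mk2 x y + mk2 x' y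
  add_r : ∀ (x : E.X) (y y' : F.X), mk2 x (y + y') = mk2 x y + mk2 x y'
  smul_l : ∀ (c : ℂ) (x : E.X) (y : F.X), mk2 (c • x) y = c • mk2 x y
  smul_r : ∀ (c : ℂ) (x : E.X) (y : F.X), mk2 x (c • y) = c • mk2 x y
  balanced : ∀ (x : E.X) (b : B) (y : F.X), mk2 (E.sm x b) y = mk2 x (F.la b y)
  ip_mk : ∀ (x x' : E.X) (y y' : F.X),
    T.ip (mk2 x y) (mk2 x' y') = F.ip y (F.la (E.ip x x') y')
  la_mk : ∀ (a : A) (x : E.X) (y : F.X), T.la a (mk2 x y) = mk2 (E.la a x) y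
  sm_mk : ∀ (x : E.X) (y : F.X) (c : C), T.sm (mk2 x y) c = mk2 x (F.sm y c)
  dense : clspan (Set.range fun p : E.X × F.X => mk2 p.1 p.2) = Set.univ

/-- Witness that `C` is the `A–D` correspondence obtained from the C*-algebra `D`
by letting `A` act on the left through the map `ψ : A → D` (e.g. the identity
correspondence when `D = A` and `ψ = id`). -/
structure PullCorr {A D : Type u} [NonUnitalCStarAlgebra A] [NonUnitalCStarAlgebra D]
    (ψ : A → D) (C : Corr A D) where
  u : D → C.X
  bij : Function.Bijective u
  add : ∀ d d' : D, u (d + d') = u d + u d'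
  smul : ∀ (c : ℂ) (d : D), u (c • d) = c • u d
  ip : ∀ d d' : D, C.ip (u d) (u d') = star d * d'
  la : ∀ (a : A) (d : D), C.la a (u d) = u (ψ a * d)
  sm : ∀ d d' : D, C.sm (u d) d' = u (d * d')

/-- Witness that `W'` is the `C–D` correspondence obtained from the `B–D` correspondence `W`
by transferring the left action along a homomorphism `σ : C → L(W)`. -/
structure ReCorr {B C D : Type u} [NonUnitalCStarAlgebra B] [NonUnitalCStarAlgebra C]
    [NonUnitalCStarAlgebra D] (W : Corr B D) (σ : C → (W.X →L[ℂ] W.X)) (W' : Corr C D) where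
  w : W.X → W'.X
  bij : Function.Bijective w
  add : ∀ ξ η : W.X, w (ξ + η) = w ξ + w η
  smul : ∀ (c : ℂ) (ξ : W.X), w (c • ξ) = c • w ξ
  ip_eq : ∀ ξ η : W.X, W'.ip (w ξ) (w η) = W.ip ξ η
  sm_eq : ∀ (ξ : W.X) (d : D), w (W.sm ξ d) = W'.sm (w ξ) d
  la_eq : ∀ (c : C) (ξ : W.X), W'.la c (w ξ) = w (σ c ξ)

/-- The structure of an `A–B` imprimitivity bimodule on an `A–B` correspondence `M`:
a compatible left `A`-valued inner product, full on both sides. -/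
structure ImpData {A B : Type u} [NonUnitalCStarAlgebra A] [NonUnitalCStarAlgebra B]
    (M : Corr A B) where
  lip : M.X → M.X → A
  lip_add : ∀ x y z : M.X, lip (x + y) z = lip x z + lip y z
  lip_smul : ∀ (c : ℂ) (x y : M.X), lip (c • x) y = c • lip x y
  lip_star : ∀ x y : M.X, star (lip x y) = lip y x
  lip_la : ∀ (a : A) (x y : M.X), lip (M.la a x) y = a * lip x y
  lip_pos : ∀ x : M.X, ∃ a : A, lip x x = star a * a
  compat : ∀ x y z : M.X, M.la (lip x y) z = M.sm x (M.ip y z)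
  full_left : clspan {a : A | ∃ x y : M.X, a = lip x y} = Set.univ
  full_right : clspan {b : B | ∃ x y : M.X, b = M.ip x y} = Set.univ

/-- Witness that the `B–A` correspondence `N` is the dual (conjugate) imprimitivity bimodule
of the `A–B` imprimitivity bimodule `M`. -/
structure DualData {A B : Type u} [NonUnitalCStarAlgebra A] [NonUnitalCStarAlgebra B]
    (M : Corr A B) (imp : ImpData M) (N : Corr B A) where
  d : M.X → N.X
  bij : Function.Bijective d
  add : ∀ x y : M.X, d (x + y) = d x + d y
  conj_smul : ∀ (c : ℂ) (x : M.X), d (c • x) = (starRingEnd ℂ c) • d x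
  la_eq : ∀ (b : B) (x : M.X), N.la b (d x) = d (M.sm x (star b))
  sm_eq : ∀ (x : M.X) (a : A), N.sm (d x) a = d (M.la (star a) x)
  ip_eq : ∀ x y : M.X, N.ip (d x) (d y) = imp.lip x y

/-- Witness that `X` (a correspondence over `A`) is a nondegenerate subcorrespondence of
`Y` (a correspondence over `B`), via `(φ̇, ϕ)`. -/
structure SubCorr {A B : Type u} [NonUnitalCStarAlgebra A] [NonUnitalCStarAlgebra B]
    (E : Corr A A) (F : Corr B B) where
  φd : E.X → F.X
  φd_inj : Function.Injective φd
  φd_add : ∀ x y : E.X, φd (x + y) = φd x + φd y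
  φd_smul : ∀ (c : ℂ) (x : E.X), φd (c • x) = c • φd x
  ϕ : A → B
  ϕ_inj : Function.Injective ϕ
  ϕ_add : ∀ a b : A, ϕ (a + b) = ϕ a + ϕ b
  ϕ_mul : ∀ a b : A, ϕ (a * b) = ϕ a * ϕ b
  ϕ_star : ∀ a : A, ϕ (star a) = star (ϕ a)
  ϕ_smul : ∀ (c : ℂ) (a : A), ϕ (c • a) = c • ϕ a
  ϕ_nondeg : clspan {b : B | ∃ (a : A) (c : B), b = ϕ a * c} = Set.univ
  la_eq : ∀ (a : A) (x : E.X), φd (E.la a x) = F.la (ϕ a) (φd x)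
  ip_eq : ∀ x y : E.X, F.ip (φd x) (φd y) = ϕ (E.ip x y)
  dense : clspan {y : F.X | ∃ (x : E.X) (b : B), y = F.sm (φd x) b} = Set.univ

/-- A representation `(π, t)` of a correspondence `X` over `A` on a C*-algebra `D`. -/
structure CorrRep {A : Type u} [NonUnitalCStarAlgebra A] (E : Corr A A)
    (D : Type u) [NonUnitalCStarAlgebra D] where
  π : A → D
  t : E.X → D
  π_add : ∀ a b : A, π (a + b) = π a + π b
  π_mul : ∀ a b : A, π (a * b) = π a * π b
  π_star : ∀ a : A, π (star a) = star (π a)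
  π_smul : ∀ (c : ℂ) (a : A), π (c • a) = c • π a
  t_add : ∀ x y : E.X, t (x + y) = t x + t y
  t_smul : ∀ (c : ℂ) (x : E.X), t (c • x) = c • t x
  mul_t : ∀ (a : A) (x : E.X), π a * t x = t (E.la a x)
  t_mul : ∀ x y : E.X, star (t x) * t y = π (E.ip x y)

/-- Covariance of a representation on the Katsura ideal:
`π(a) = Ψ_t(φ_X(a))` for `a ∈ J_X`, expressed by simultaneous approximation of
`φ_X(a)` by finite-rank operators and of `π(a)` by the corresponding finite sums. -/
def CorrRep.Covariant {A : Type u} [NonUnitalCStarAlgebra A] {E : Corr A A}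
    {D : Type u} [NonUnitalCStarAlgebra D] (R : CorrRep E D) : Prop :=
  ∀ a ∈ E.katsuraIdeal, ∀ ε > (0 : ℝ), ∃ (k : ℕ) (x y : Fin k → E.X),
    ‖E.lmul a - ∑ i, E.rankOne (x i) (y i)‖ < ε ∧
    ‖R.π a - ∑ i, R.t (x i) * star (R.t (y i))‖ < ε

/-- The products `t(x₁)⋯t(xₙ)`, i.e. `t^n` applied to elementary tensors. -/
def CorrRep.tProd {A : Type u} [NonUnitalCStarAlgebra A] {E : Corr A A}
    {D : Type u} [NonUnitalCStarAlgebra D] (R : CorrRep E D) :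
    (n : ℕ) → (Fin (n + 1) → E.X) → D
  | 0, x => R.t (x 0)
  | (k + 1), x => R.t (x 0) * R.tProd k (fun i => x i.succ)

/-- A Cuntz–Pimsner algebra for `X`: a C*-algebra `O` with a universal injective covariant
representation of `X`, generated by the image of that representation. -/
structure CuntzPimsner {A : Type u} [NonUnitalCStarAlgebra A] (E : Corr A A) :
    Type (u + 1) where
  O : Type u
  [str : NonUnitalCStarAlgebra O]
  rep : CorrRep E O
  covariant : rep.Covariant
  injective : Function.Injective rep.π
  generates :
    Dense ((NonUnitalStarAlgebra.adjoin ℂ (Set.range rep.π ∪ Set.range rep.t) :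
      NonUnitalStarSubalgebra ℂ O) : Set O)
  universal : ∀ (D : Type u) [NonUnitalCStarAlgebra D] (R : CorrRep E D), R.Covariant →
    ∃ ρ : O → D, Continuous ρ ∧
      (∀ p q : O, ρ (p + q) = ρ p + ρ q) ∧
      (∀ (c : ℂ) (p : O), ρ (c • p) = c • ρ p) ∧
      (∀ p q : O, ρ (p * q) = ρ p * ρ q) ∧
      (∀ p : O, ρ (star p) = star (ρ p)) ∧
      (∀ a : A, ρ (rep.π a) = R.π a) ∧
      (∀ x : E.X, ρ (rep.t x) = R.t x)

attribute [instance] CuntzPimsner.str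

/-- The gauge action of the circle on a Cuntz–Pimsner algebra. -/
structure GaugeAction {A : Type u} [NonUnitalCStarAlgebra A] {E : Corr A A}
    (CP : CuntzPimsner E) where
  g : ℂ → CP.O → CP.O
  g_add : ∀ z : ℂ, ‖z‖ = 1 → ∀ S T : CP.O, g z (S + T) = g z S + g z T
  g_smul : ∀ z : ℂ, ‖z‖ = 1 → ∀ (c : ℂ) (S : CP.O), g z (c • S) = c • g z S
  g_mul : ∀ z : ℂ, ‖z‖ = 1 → ∀ S T : CP.O, g z (S * T) = g z S * g z T
  g_star : ∀ z : ℂ, ‖z‖ = 1 → ∀ S : CP.O, g z (star S) = star (g z S)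
  g_comp : ∀ z w : ℂ, ‖z‖ = 1 → ‖w‖ = 1 → ∀ S : CP.O, g (z * w) S = g z (g w S)
  g_one : ∀ S : CP.O, g 1 S = S
  g_cont : ∀ S : CP.O, Continuous fun z : {z : ℂ // ‖z‖ = 1} => g z.1 S
  g_π : ∀ z : ℂ, ‖z‖ = 1 → ∀ a : A, g z (CP.rep.π a) = CP.rep.π a
  g_t : ∀ z : ℂ, ‖z‖ = 1 → ∀ x : E.X, g z (CP.rep.t x) = z • CP.rep.t x

/-- The data of a morphism `X → Y` in the category `ECCor`: a regular `A–B` correspondence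
`M` with `J_X · M ⊆ M · J_Y`, together with a correspondence isomorphism
`U : X ⊗_A M → M ⊗_B Y`. -/
structure EMor {A B : Type u} [NonUnitalCStarAlgebra A] [NonUnitalCStarAlgebra B]
    (E : Corr A A) (F : Corr B B) : Type (u + 1) where
  M : Corr A B
  regular : M.Regular
  kat : KatsuraCompat E M F
  TXM : Corr A B
  tdXM : TensorData E M TXM
  TMY : Corr A B
  tdMY : TensorData M F TMY
  U : CorrIso TXM TMY

/-- Two morphism data `(M, U_M)` and `(M', U_{M'})` are isomorphic:
there is an isomorphism `ξ : M → M'` with `U_{M'} ∘ (1_X ⊗ ξ) = (ξ ⊗ 1_Y) ∘ U_M`. -/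
def EMorEquiv {A B : Type u} [NonUnitalCStarAlgebra A] [NonUnitalCStarAlgebra B]
    {E : Corr A A} {F : Corr B B} (m m' : EMor E F) : Prop :=
  ∃ ξ : CorrIso m.M m'.M,
  ∃ Ξ : m.TMY.X → m'.TMY.X,
    (∀ ζ η, Ξ (ζ + η) = Ξ ζ + Ξ η) ∧
    (∀ (c : ℂ) ζ, Ξ (c • ζ) = c • Ξ ζ) ∧
    Continuous Ξ ∧
    (∀ (mm : m.M.X) (y : F.X), Ξ (m.tdMY.mk2 mm y) = m'.tdMY.mk2 (ξ.toFun mm) y) ∧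
    (∀ (x : E.X) (mm : m.M.X),
      m'.U.toFun (m'.tdXM.mk2 x (ξ.toFun mm)) = Ξ (m.U.toFun (m.tdXM.mk2 x mm)))

/-- `p` is a composite of `m : X → Y` and `n : Y → Z` in `ECCor`:
`p.M = M ⊗_B N` and `U_P = (1_M ⊗ U_N)(U_M ⊗ 1_N)` modulo the canonical identifications. -/
def EIsComposite {A B C : Type u} [NonUnitalCStarAlgebra A] [NonUnitalCStarAlgebra B]
    [NonUnitalCStarAlgebra C] {E : Corr A A} {F : Corr B B} {G : Corr C C}
    (m : EMor E F) (n : EMor F G) (p : EMor E G) : Prop :=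
  ∃ td : TensorData m.M n.M p.M,
  ∃ Ξ : m.M.X → n.TMY.X → p.TMY.X,       -- m ⊗ (n ⊗ z) ↦ (m ⊗ n) ⊗ z
  ∃ Θ : m.TMY.X → n.M.X → p.TMY.X,       -- (m ⊗ y) ⊗ n ↦ m ⊗ U_N(y ⊗ n)
    (∀ mm : m.M.X, (∀ ζ η, Ξ mm (ζ + η) = Ξ mm ζ + Ξ mm η) ∧
      (∀ (c : ℂ) ζ, Ξ mm (c • ζ) = c • Ξ mm ζ) ∧ Continuous (Ξ mm)) ∧
    (∀ (mm : m.M.X) (nn : n.M.X) (z : G.X),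
      Ξ mm (n.tdMY.mk2 nn z) = p.tdMY.mk2 (td.mk2 mm nn) z) ∧
    (∀ nn : n.M.X, (∀ ζ η, Θ (ζ + η) nn = Θ ζ nn + Θ η nn) ∧
      (∀ (c : ℂ) ζ, Θ (c • ζ) nn = c • Θ ζ nn) ∧ Continuous (fun ζ => Θ ζ nn)) ∧
    (∀ (mm : m.M.X) (y : F.X) (nn : n.M.X),
      Θ (m.tdMY.mk2 mm y) nn = Ξ mm (n.U.toFun (n.tdXM.mk2 y nn))) ∧
    (∀ (x : E.X) (mm : m.M.X) (nn : n.M.X),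
      p.U.toFun (p.tdXM.mk2 x (td.mk2 mm nn)) = Θ (m.U.toFun (m.tdXM.mk2 x mm)) nn)

/-- `e` is an identity morphism on `X` in `ECCor`: `e.M` is the identity correspondence `A`
and `U_A = i_l⁻¹ ∘ i_r : X ⊗_A A → A ⊗_A X`, i.e. `i_l (U_A (x ⊗ a)) = x · a`. -/
def EIsIdentity {A : Type u} [NonUnitalCStarAlgebra A] {E : Corr A A}
    (e : EMor E E) : Prop :=
  ∃ idd : PullCorr (fun a : A => a) e.M,
  ∃ il : e.TMY.X → E.X,
    (∀ ζ η, il (ζ + η) = il ζ + il η) ∧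
    (∀ (c : ℂ) ζ, il (c • ζ) = c • il ζ) ∧
    Continuous il ∧
    Function.Injective il ∧
    (∀ (a : A) (x : E.X), il (e.tdMY.mk2 (idd.u a) x) = E.la a x) ∧
    (∀ (x : E.X) (a : A), il (e.U.toFun (e.tdXM.mk2 x (idd.u a))) = E.sm x a)

/-- A morphism in `ECCor` is an isomorphism: it has a two-sided inverse up to
isomorphism of morphism data. -/
def EIsEIso {A B : Type u} [NonUnitalCStarAlgebra A] [NonUnitalCStarAlgebra B]
    {E : Corr A A} {F : Corr B B} (m : EMor E F) : Prop :=
  ∃ (n : EMor F E) (p : EMor E E) (q : EMor F F) (e : EMor E E) (f : EMor F F),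
    EIsComposite m n p ∧ EIsIdentity e ∧ EMorEquiv p e ∧
    EIsComposite n m q ∧ EIsIdentity f ∧ EMorEquiv q f

/-- The standing data for the C-covariant representation of `X` on `K(M ⊗_B O_Y)`
associated with a morphism `[M, U_M] : X → Y` in `ECCor`:  `O_Y` regarded as a
`B–O_Y` correspondence, the tensor product `W = M ⊗_B O_Y`, the canonical map
`Λ : (M ⊗_B Y) × O_Y → W`, `(m ⊗ y, S) ↦ m ⊗ t_Y(y)S`, and the operators
`Φ(x) = (1_M ⊗ V_Y)(T(x) ⊗ 1_{O_Y})`. -/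
structure CCovSetup {A B : Type u} [NonUnitalCStarAlgebra A] [NonUnitalCStarAlgebra B]
    {E : Corr A A} {F : Corr B B} (m : EMor E F) (CPY : CuntzPimsner F) :
    Type (u + 1) where
  OYc : Corr B CPY.O
  pcY : PullCorr CPY.rep.π OYc
  W : Corr A CPY.O
  tdW : TensorData m.M OYc W
  Λ : m.TMY.X → CPY.O → W.X
  Λ_add : ∀ (S : CPY.O) (ζ η : m.TMY.X), Λ (ζ + η) S = Λ ζ S + Λ η S
  Λ_smul : ∀ (S : CPY.O) (c : ℂ) (ζ : m.TMY.X), Λ (c • ζ) S = c • Λ ζ S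
  Λ_cont : ∀ S : CPY.O, Continuous fun ζ => Λ ζ S
  Λ_mk : ∀ (mm : m.M.X) (y : F.X) (S : CPY.O),
    Λ (m.tdMY.mk2 mm y) S = tdW.mk2 mm (pcY.u (CPY.rep.t y * S))
  Φ : E.X → (W.X →L[ℂ] W.X)
  Φ_mk : ∀ (x : E.X) (mm : m.M.X) (S : CPY.O),
    Φ x (tdW.mk2 mm (pcY.u S)) = Λ (m.U.toFun (m.tdXM.mk2 x mm)) S

/-- The homomorphism `σ : O_X → K(M ⊗_B O_Y) ⊆ L(M ⊗_B O_Y)` induced by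
the C-covariant representation. -/
structure SigmaData {A B : Type u} [NonUnitalCStarAlgebra A] [NonUnitalCStarAlgebra B]
    {E : Corr A A} {F : Corr B B} {m : EMor E F} {CPY : CuntzPimsner F}
    (st : CCovSetup m CPY) (CPX : CuntzPimsner E) where
  σ : CPX.O → (st.W.X →L[ℂ] st.W.X)
  σ_add : ∀ S T : CPX.O, σ (S + T) = σ S + σ T
  σ_smul : ∀ (c : ℂ) (S : CPX.O), σ (c • S) = c • σ S
  σ_mul : ∀ S T : CPX.O, σ (S * T) = (σ S).comp (σ T)
  σ_star : ∀ S : CPX.O, st.W.IsAdjointPair (σ S) (σ (star S))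
  σ_cont : Continuous σ
  σ_t : ∀ x : E.X, σ (CPX.rep.t x) = st.Φ x
  σ_π : ∀ a : A, σ (CPX.rep.π a) = st.W.lmul a

/-- A bundled C*-correspondence over a C*-algebra. -/
structure BCorr : Type (u + 1) where
  alg : Type u
  [str : NonUnitalCStarAlgebra alg]
  cor : Corr alg alg

attribute [instance] BCorr.str

/-- Elementary strong shift equivalence through *regular* correspondences `R`, `S`:
`X ≅ R ⊗_B S` and `Y ≅ S ⊗_A R`. -/
def ElemSSERegular (E F : BCorr) : Prop :=
  ∃ (R : Corr E.alg F.alg) (S : Corr F.alg E.alg)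
    (T₁ : Corr E.alg E.alg) (_ : TensorData R S T₁)
    (T₂ : Corr F.alg F.alg) (_ : TensorData S R T₂),
    R.Regular ∧ S.Regular ∧ Nonempty (CorrIso T₁ E.cor) ∧ Nonempty (CorrIso T₂ F.cor)

/-- Strong shift equivalence (with all intermediate data regular). -/
def StrongSSERegular (E F : BCorr) : Prop :=
  ∃ (n : ℕ) (Z : Fin (n + 1) → BCorr),
    Z 0 = E ∧ Z (Fin.last n) = F ∧
    (∀ i, (Z i).cor.Regular) ∧
    ∀ i : Fin n, ElemSSERegular (Z i.castSucc) (Z i.succ)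

/-- The tower of tensor powers `X^{⊗ k}` of a correspondence `X` over `A`
(with `X^{⊗ 0} = A`), together with the "append on the right" maps
`X^{⊗ k} × X → X^{⊗ (k+1)}`. -/
structure PowerTower {A : Type u} [NonUnitalCStarAlgebra A] (E : Corr A A) :
    Type (u + 1) where
  P : ℕ → Corr A A
  zero : PullCorr (fun a : A => a) (P 0)
  step : ∀ k : ℕ, TensorData E (P k) (P (k + 1))
  app : ∀ k : ℕ, (P k).X → E.X → (P (k + 1)).X
  app_add : ∀ (k : ℕ) (y : E.X) (w w' : (P k).X), app k (w + w') y = app k w y + app k w' y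
  app_smul : ∀ (k : ℕ) (y : E.X) (c : ℂ) (w : (P k).X), app k (c • w) y = c • app k w y
  app_cont : ∀ (k : ℕ) (y : E.X), Continuous fun w => app k w y
  app_base : ∀ (a : A) (y : E.X) (b : A),
    (P 1).sm (app 0 (zero.u a) y) b = (step 0).mk2 (E.la a y) (zero.u b)
  app_step : ∀ (k : ℕ) (x : E.X) (w : (P k).X) (y : E.X),
    app (k + 1) ((step k).mk2 x w) y = (step (k + 1)).mk2 x (app k w y)

end
/-! ### Auxiliary machinery -/

noncomputable section

universe u

open scoped ComplexConjugate

section ClspanBasics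

variable {V : Type*} [NormedAddCommGroup V] [NormedSpace ℂ V]
variable {Z : Type*} [NormedAddCommGroup Z] [NormedSpace ℂ Z]

lemma clspan_subset_of {s D : Set V} (hD : IsClosed D) (h0 : (0:V) ∈ D)
    (hadd : ∀ x ∈ D, ∀ y ∈ D, x + y ∈ D)
    (hsmul : ∀ (c : ℂ), ∀ x ∈ D, c • x ∈ D) (hs : s ⊆ D) : clspan s ⊆ D := by
  have hspan : (Submodule.span ℂ s : Set V) ⊆ D := by
    intro x hx
    induction hx using Submodule.span_induction with
    | mem x hx => exact hs hx
    | zero => exact h0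
    | add x y _ _ hx hy => exact hadd _ hx _ hy
    | smul c x _ hx => exact hsmul c _ hx
  exact hD.closure_subset_iff.mpr hspan

lemma forall_mem_of_clspan {s D : Set V} (huniv : clspan s = Set.univ)
    (hD : IsClosed D) (h0 : (0:V) ∈ D)
    (hadd : ∀ x ∈ D, ∀ y ∈ D, x + y ∈ D)
    (hsmul : ∀ (c : ℂ), ∀ x ∈ D, c • x ∈ D) (hs : s ⊆ D) : ∀ x : V, x ∈ D := by
  intro x
  have := clspan_subset_of hD h0 hadd hsmul hs
  rw [huniv] at this
  exact this (Set.mem_univ x)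

/-- Two continuous, additive, `θ`-homogeneous maps agreeing on `s` with dense span agree. -/
lemma eq_of_clspan {s : Set V} (huniv : clspan s = Set.univ) {f g : V → Z} (θ : ℂ → ℂ)
    (hf : Continuous f) (hg : Continuous g)
    (hfa : ∀ x y, f (x + y) = f x + f y) (hga : ∀ x y, g (x + y) = g x + g y)
    (hfs : ∀ (c : ℂ) x, f (c • x) = θ c • f x) (hgs : ∀ (c : ℂ) x, g (c • x) = θ c • g x)
    (hs : ∀ x ∈ s, f x = g x) : ∀ x, f x = g x := by
  have hf0 : f 0 = 0 := by
    have := hfa 0 0; rw [add_zero] at this; exact (left_eq_add.mp this)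
  have hg0 : g 0 = 0 := by
    have := hga 0 0; rw [add_zero] at this; exact (left_eq_add.mp this)
  refine forall_mem_of_clspan (D := {x | f x = g x}) huniv (isClosed_eq hf hg) ?_ ?_ ?_ hs
  · simp [hf0, hg0]
  · intro x hx y hy; simp only [Set.mem_setOf_eq] at *; rw [hfa, hga, hx, hy]
  · intro c x hx; simp only [Set.mem_setOf_eq] at *; rw [hfs, hgs, hx]

lemma clm_eq_of_clspan {s : Set V} (huniv : clspan s = Set.univ) (f g : V →L[ℂ] Z)
    (hs : ∀ x ∈ s, f x = g x) : f = g := by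
  ext x
  exact eq_of_clspan huniv (fun c => c) f.continuous g.continuous (map_add f) (map_add g)
    (map_smul f) (map_smul g) hs x

lemma clspan_image {W : Type*} [NormedAddCommGroup W] [NormedSpace ℂ W]
    (T : V →L[ℂ] W) (hT : Function.Surjective T) {s : Set V} (h : clspan s = Set.univ) :
    clspan (T '' s) = Set.univ := by
  apply Set.eq_univ_of_univ_subset
  have h1 : (Set.univ : Set W) = T '' (clspan s) := by rw [h, Set.image_univ, hT.range_eq]
  rw [h1]
  unfold clspan
  calc T '' closure ((Submodule.span ℂ s : Submodule ℂ V) : Set V)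
      ⊆ closure (T '' ((Submodule.span ℂ s : Submodule ℂ V) : Set V)) :=
        image_closure_subset_closure_image T.continuous
    _ ⊆ closure ((Submodule.span ℂ (T '' s) : Submodule ℂ W) : Set W) := by
        apply closure_mono
        change (T : V →ₗ[ℂ] W) '' _ ⊆ ((Submodule.span ℂ ((T : V →ₗ[ℂ] W) '' s) : Submodule ℂ W) : Set W)
        rw [← Submodule.map_span]
        rintro _ ⟨y, hy, rfl⟩
        exact Submodule.mem_map_of_mem hy

omit [NormedAddCommGroup V] [NormedSpace ℂ V] in
lemma clspan_range_comp_surjective {α β : Type*} (v : β → V) (e : α → β)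
    (he : Function.Surjective e) :
    Set.range (fun a => v (e a)) = Set.range v := by
  ext x; constructor
  · rintro ⟨a, rfl⟩; exact ⟨e a, rfl⟩
  · rintro ⟨b, rfl⟩; obtain ⟨a, rfl⟩ := he b; exact ⟨a, rfl⟩

end ClspanBasics

end
noncomputable section
universe u

section CorrBasics

variable {A B : Type u} [NonUnitalCStarAlgebra A] [NonUnitalCStarAlgebra B]

namespace Corr

variable (E : Corr A B)

lemma ip_add_left (x y z : E.X) : E.ip (x + y) z = E.ip x z + E.ip y z := by
  rw [← E.ip_star z (x + y), E.ip_add, star_add, E.ip_star, E.ip_star]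

lemma ip_smul_left (c : ℂ) (x y : E.X) : E.ip (c • x) y = (starRingEnd ℂ c) • E.ip x y := by
  rw [← E.ip_star y (c • x), E.ip_smul, star_smul, E.ip_star, starRingEnd_apply]

/-- `⟨x, ·⟩` as a continuous linear map. -/
def ipCLM (x : E.X) : E.X →L[ℂ] B :=
  LinearMap.mkContinuous
    { toFun := E.ip x
      map_add' := E.ip_add x
      map_smul' := fun c y => E.ip_smul c x y } ‖x‖ (fun y => E.ip_bound x y)

@[simp] lemma ipCLM_apply (x y : E.X) : E.ipCLM x y = E.ip x y := rfl

/-- `a ↦ a · x` as a continuous linear map. -/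
def laCLM (x : E.X) : A →L[ℂ] E.X :=
  LinearMap.mkContinuous
    { toFun := fun a => E.la a x
      map_add' := fun a b => E.la_add' a b x
      map_smul' := fun c a => E.la_smul' c a x } ‖x‖
    (fun a => by rw [mul_comm]; exact E.la_bound a x)

@[simp] lemma laCLM_apply (a : A) (x : E.X) : E.laCLM x a = E.la a x := rfl

@[simp] lemma lmul_apply (a : A) (x : E.X) : E.lmul a x = E.la a x := rfl

lemma ip_zero (x : E.X) : E.ip x 0 = 0 := map_zero (E.ipCLM x)

lemma zero_ip (x : E.X) : E.ip 0 x = 0 := by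
  rw [← E.ip_star, ip_zero, star_zero]

lemma ip_sub (x y z : E.X) : E.ip x (y - z) = E.ip x y - E.ip x z := map_sub (E.ipCLM x) y z

lemma ip_sub_left (x y z : E.X) : E.ip (x - y) z = E.ip x z - E.ip y z := by
  rw [← E.ip_star, ip_sub, star_sub, E.ip_star, E.ip_star]

lemma norm_sq_ip (x : E.X) : ‖x‖ ^ 2 = ‖E.ip x x‖ := E.ip_norm x

lemma eq_zero_of_ip_self {x : E.X} (h : E.ip x x = 0) : x = 0 := by
  have := E.ip_norm x
  rw [h, norm_zero, pow_eq_zero_iff (two_ne_zero)] at this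
  exact norm_eq_zero.mp this

lemma ext_of_ip {x y : E.X} (h : ∀ z, E.ip z x = E.ip z y) : x = y := by
  have hxy : E.ip (x - y) (x - y) = 0 := by
    rw [E.ip_sub, h (x - y), sub_self]
  have := E.eq_zero_of_ip_self hxy
  exact sub_eq_zero.mp this

lemma la_zero_right (a : A) : E.la a (0 : E.X) = 0 := map_zero (E.lmul a)

lemma la_zero_left (x : E.X) : E.la (0 : A) x = 0 := map_zero (E.laCLM x)

lemma la_continuous_left (x : E.X) : Continuous (fun a : A => E.la a x) :=
  (E.laCLM x).continuous

lemma ip_sum_right {ι : Type*} (s : Finset ι) (f : ι → E.X) (x : E.X) :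
    E.ip x (∑ i ∈ s, f i) = ∑ i ∈ s, E.ip x (f i) := map_sum (E.ipCLM x) f s

lemma ip_sum_left {ι : Type*} (s : Finset ι) (f : ι → E.X) (x : E.X) :
    E.ip (∑ i ∈ s, f i) x = ∑ i ∈ s, E.ip (f i) x := by
  rw [← E.ip_star, ip_sum_right, star_sum]
  exact Finset.sum_congr rfl (fun i _ => by rw [E.ip_star])

/-- full sesquilinear expansion -/
lemma ip_sum_sum {ι : Type*} (s : Finset ι) (c : ι → ℂ) (f g : ι → E.X) :
    E.ip (∑ i ∈ s, c i • f i) (∑ j ∈ s, c j • g j)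
      = ∑ i ∈ s, ∑ j ∈ s, ((starRingEnd ℂ) (c i) * c j) • E.ip (f i) (g j) := by
  rw [ip_sum_left]
  refine Finset.sum_congr rfl (fun i _ => ?_)
  rw [E.ip_smul_left, ip_sum_right]
  rw [Finset.smul_sum]
  refine Finset.sum_congr rfl (fun j _ => ?_)
  rw [E.ip_smul, mul_smul]

lemma norm_le_of_sq_le_sq {a b : ℝ} (ha : 0 ≤ a) (hb : 0 ≤ b) (h : a ^ 2 ≤ b ^ 2) : a ≤ b := by
  nlinarith

end Corr

end CorrBasics

end
noncomputable section
universe u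

section Ext

variable {R1 S1 R2 S2 : Type u} [NonUnitalCStarAlgebra R1] [NonUnitalCStarAlgebra S1]
  [NonUnitalCStarAlgebra R2] [NonUnitalCStarAlgebra S2]

/-- Extension of a map prescribed on a total family of vectors, subject to a norm bound on
finite linear combinations. -/
lemma Corr.ext_clm (P : Corr R1 S1) {Z : Type u} [NormedAddCommGroup Z] [NormedSpace ℂ Z]
    [CompleteSpace Z] {ι : Type u} (v : ι → P.X) (g : ι → Z) (K : ℝ) (hK : 0 ≤ K)
    (hdense : clspan (Set.range v) = Set.univ)
    (hbound : ∀ (s : Finset ι) (c : ι → ℂ),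
      ‖∑ i ∈ s, c i • g i‖ ≤ K * ‖∑ i ∈ s, c i • v i‖) :
    ∃ F : P.X →L[ℂ] Z, (∀ i, F (v i) = g i) ∧ ∀ x, ‖F x‖ ≤ K * ‖x‖ := by
  classical
  set T : (ι →₀ ℂ) →ₗ[ℂ] P.X := Finsupp.linearCombination ℂ v with hT
  set G : (ι →₀ ℂ) →ₗ[ℂ] Z := Finsupp.linearCombination ℂ g with hG
  have hTle : ∀ l : ι →₀ ℂ, ‖G l‖ ≤ K * ‖T l‖ := by
    intro l
    have h1 : T l = ∑ i ∈ l.support, l i • v i := by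
      rw [hT, Finsupp.linearCombination_apply, Finsupp.sum]
    have h2 : G l = ∑ i ∈ l.support, l i • g i := by
      rw [hG, Finsupp.linearCombination_apply, Finsupp.sum]
    rw [h1, h2]; exact hbound l.support l
  have hker : LinearMap.ker T ≤ LinearMap.ker G := by
    intro l hl
    rw [LinearMap.mem_ker] at hl ⊢
    have := hTle l
    rw [hl, norm_zero, mul_zero] at this
    exact norm_le_zero_iff.mp this
  set e := LinearMap.quotKerEquivRange T
  set Gq : ((ι →₀ ℂ) ⧸ LinearMap.ker T) →ₗ[ℂ] Z := (LinearMap.ker T).liftQ G hker with hGq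
  set G0 : (LinearMap.range T) →ₗ[ℂ] Z := Gq.comp (e.symm : _ ≃ₗ[ℂ] _).toLinearMap with hG0
  have hG0mk : ∀ l : ι →₀ ℂ, G0 ⟨T l, LinearMap.mem_range_self T l⟩ = G l := by
    intro l
    have h1 : e (Submodule.Quotient.mk l) = ⟨T l, LinearMap.mem_range_self T l⟩ := by
      apply Subtype.ext
      exact LinearMap.quotKerEquivRange_apply_mk T l
    have h2 : e.symm ⟨T l, LinearMap.mem_range_self T l⟩ = Submodule.Quotient.mk l := by
      rw [← h1, LinearEquiv.symm_apply_apply]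
    rw [hG0]
    simp only [LinearMap.comp_apply, LinearEquiv.coe_coe, h2, hGq, Submodule.liftQ_apply]
  have hG0b : ∀ y : LinearMap.range T, ‖G0 y‖ ≤ K * ‖(y : P.X)‖ := by
    rintro ⟨y, hy⟩
    obtain ⟨l, rfl⟩ := hy
    rw [hG0mk l]
    exact hTle l
  set G0c : (LinearMap.range T) →L[ℂ] Z := LinearMap.mkContinuous G0 K hG0b with hG0c
  set j : (LinearMap.range T) →L[ℂ] P.X := (LinearMap.range T).subtypeL with hj
  have hrange : Set.range j = ((LinearMap.range T : Submodule ℂ P.X) : Set P.X) := by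
    ext x; constructor
    · rintro ⟨⟨y, hy⟩, rfl⟩; exact hy
    · intro hx; exact ⟨⟨x, hx⟩, rfl⟩
  have hrangeT : ((LinearMap.range T : Submodule ℂ P.X) : Set P.X)
      = ((Submodule.span ℂ (Set.range v) : Submodule ℂ P.X) : Set P.X) := by
    rw [hT, Finsupp.range_linearCombination]
  have hjdense : DenseRange j := by
    rw [DenseRange, hrange, hrangeT]
    rw [dense_iff_closure_eq]
    exact hdense
  have hjui : IsUniformInducing j := by
    have : Isometry j := isometry_subtype_coe
    exact this.isUniformInducing
  refine ⟨G0c.extend j, ?_, ?_⟩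
  · intro i
    have hvi : v i ∈ LinearMap.range T := by
      refine ⟨Finsupp.single i 1, ?_⟩
      rw [hT, Finsupp.linearCombination_single, one_smul]
    have hext := ContinuousLinearMap.extend_eq G0c hjdense hjui ⟨v i, hvi⟩
    have h1 : (G0c.extend j) (v i) = G0c ⟨v i, hvi⟩ := hext
    rw [h1]
    have h2 : (⟨v i, hvi⟩ : LinearMap.range T)
        = ⟨T (Finsupp.single i 1), LinearMap.mem_range_self T _⟩ := by
      apply Subtype.ext
      show v i = T (Finsupp.single i 1)
      rw [hT, Finsupp.linearCombination_single, one_smul]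
    have h3 : G0c ⟨v i, hvi⟩ = G (Finsupp.single i 1) := by
      show G0 ⟨v i, hvi⟩ = _
      have h3' : G0 ⟨v i, hvi⟩ = G0 ⟨T (Finsupp.single i 1), LinearMap.mem_range_self T _⟩ :=
        congrArg G0 h2
      rw [h3']
      exact hG0mk _
    rw [h3, hG, Finsupp.linearCombination_single, one_smul]
  · set F := G0c.extend j
    have hD : closure ((LinearMap.range T : Submodule ℂ P.X) : Set P.X) = Set.univ := by
      rw [hrangeT]; exact hdense
    have hcl : IsClosed {x : P.X | ‖F x‖ ≤ K * ‖x‖} := by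
      apply isClosed_le
      · exact (continuous_norm.comp F.continuous)
      · exact continuous_const.mul continuous_norm
    have hsub : ((LinearMap.range T : Submodule ℂ P.X) : Set P.X)
        ⊆ {x : P.X | ‖F x‖ ≤ K * ‖x‖} := by
      intro x hx
      simp only [Set.mem_setOf_eq]
      have hext := ContinuousLinearMap.extend_eq G0c hjdense hjui ⟨x, hx⟩
      have h1 : F x = G0c ⟨x, hx⟩ := hext
      rw [h1]
      exact hG0b ⟨x, hx⟩
    intro x
    have : (Set.univ : Set P.X) ⊆ {x : P.X | ‖F x‖ ≤ K * ‖x‖} := by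
      rw [← hD]
      exact hcl.closure_subset_iff.mpr hsub
    exact this (Set.mem_univ x)

/-- Norm bound on combinations from a "dominated" inner-product relation. -/
lemma Corr.bound_of_dom (P : Corr R1 S1) (Q : Corr R2 S2) {ι : Type u}
    (v : ι → P.X) (g : ι → Q.X) (D : S1 → S2) (K2 : ℝ) (hK2 : 0 ≤ K2)
    (hDadd : ∀ e e', D (e + e') = D e + D e')
    (hDsmul : ∀ (c : ℂ) e, D (c • e) = c • D e)
    (hDb : ∀ e, ‖D e‖ ≤ K2 * ‖e‖)
    (hip : ∀ i j, Q.ip (g i) (g j) = D (P.ip (v i) (v j))) :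
    ∀ (s : Finset ι) (c : ι → ℂ),
      ‖∑ i ∈ s, c i • g i‖ ≤ Real.sqrt K2 * ‖∑ i ∈ s, c i • v i‖ := by
  intro s c
  set Dh : S1 →+ S2 := AddMonoidHom.mk' D hDadd with hDh
  have key : Q.ip (∑ i ∈ s, c i • g i) (∑ j ∈ s, c j • g j)
      = D (P.ip (∑ i ∈ s, c i • v i) (∑ j ∈ s, c j • v j)) := by
    rw [Q.ip_sum_sum, P.ip_sum_sum]
    have : D (∑ i ∈ s, ∑ j ∈ s, ((starRingEnd ℂ) (c i) * c j) • P.ip (v i) (v j))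
        = ∑ i ∈ s, ∑ j ∈ s, D (((starRingEnd ℂ) (c i) * c j) • P.ip (v i) (v j)) := by
      show Dh _ = _
      rw [map_sum]
      exact Finset.sum_congr rfl (fun i _ => map_sum Dh _ s)
    rw [this]
    refine Finset.sum_congr rfl (fun i _ => Finset.sum_congr rfl (fun j _ => ?_))
    rw [hip i j, hDsmul]
  have h1 : ‖∑ i ∈ s, c i • g i‖ ^ 2 ≤ K2 * ‖∑ i ∈ s, c i • v i‖ ^ 2 := by
    rw [Q.norm_sq_ip, key, P.norm_sq_ip]
    exact hDb _
  apply Corr.norm_le_of_sq_le_sq (norm_nonneg _) (by positivity)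
  calc ‖∑ i ∈ s, c i • g i‖ ^ 2 ≤ K2 * ‖∑ i ∈ s, c i • v i‖ ^ 2 := h1
    _ = (Real.sqrt K2 * ‖∑ i ∈ s, c i • v i‖) ^ 2 := by
        rw [mul_pow, Real.sq_sqrt hK2]

/-- Norm bound on combinations when the image inner products are `⟨v i, Tup (v j)⟩`. -/
lemma Corr.bound_of_op (P : Corr R1 S1) (Q : Corr R2 S1) {ι : Type u}
    (v : ι → P.X) (g : ι → Q.X) (Tup : P.X →L[ℂ] P.X)
    (hip : ∀ i j, Q.ip (g i) (g j) = P.ip (v i) (Tup (v j))) :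
    ∀ (s : Finset ι) (c : ι → ℂ),
      ‖∑ i ∈ s, c i • g i‖ ≤ Real.sqrt ‖Tup‖ * ‖∑ i ∈ s, c i • v i‖ := by
  intro s c
  have key : Q.ip (∑ i ∈ s, c i • g i) (∑ j ∈ s, c j • g j)
      = P.ip (∑ i ∈ s, c i • v i) (Tup (∑ j ∈ s, c j • v j)) := by
    rw [Q.ip_sum_sum]
    have h2 : Tup (∑ j ∈ s, c j • v j) = ∑ j ∈ s, c j • Tup (v j) := by
      rw [map_sum]; exact Finset.sum_congr rfl (fun j _ => map_smul Tup _ _)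
    rw [h2]
    rw [show P.ip (∑ i ∈ s, c i • v i) (∑ j ∈ s, c j • Tup (v j))
      = ∑ i ∈ s, ∑ j ∈ s, ((starRingEnd ℂ) (c i) * c j) • P.ip (v i) (Tup (v j))
      from P.ip_sum_sum s c v (fun j => Tup (v j))]
    exact Finset.sum_congr rfl (fun i _ => Finset.sum_congr rfl (fun j _ => by rw [hip i j]))
  have h1 : ‖∑ i ∈ s, c i • g i‖ ^ 2 ≤ ‖Tup‖ * ‖∑ i ∈ s, c i • v i‖ ^ 2 := by
    rw [Q.norm_sq_ip, key]
    calc ‖P.ip (∑ i ∈ s, c i • v i) (Tup (∑ j ∈ s, c j • v j))‖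
        ≤ ‖∑ i ∈ s, c i • v i‖ * ‖Tup (∑ j ∈ s, c j • v j)‖ := P.ip_bound _ _
      _ ≤ ‖∑ i ∈ s, c i • v i‖ * (‖Tup‖ * ‖∑ j ∈ s, c j • v j‖) := by
          apply mul_le_mul_of_nonneg_left (Tup.le_opNorm _) (norm_nonneg _)
      _ = ‖Tup‖ * ‖∑ i ∈ s, c i • v i‖ ^ 2 := by ring
  apply Corr.norm_le_of_sq_le_sq (norm_nonneg _) (by positivity)
  calc ‖∑ i ∈ s, c i • g i‖ ^ 2 ≤ ‖Tup‖ * ‖∑ i ∈ s, c i • v i‖ ^ 2 := h1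
    _ = (Real.sqrt ‖Tup‖ * ‖∑ i ∈ s, c i • v i‖) ^ 2 := by
        rw [mul_pow, Real.sq_sqrt (norm_nonneg _)]

end Ext

end
noncomputable section
universe u

section StructureMaps

variable {A B C : Type u} [NonUnitalCStarAlgebra A] [NonUnitalCStarAlgebra B]
  [NonUnitalCStarAlgebra C]

lemma eq_of_sq_eq {a b : ℝ} (ha : 0 ≤ a) (hb : 0 ≤ b) (h : a ^ 2 = b ^ 2) : a = b :=
  le_antisymm (Corr.norm_le_of_sq_le_sq ha hb h.le) (Corr.norm_le_of_sq_le_sq hb ha h.ge)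

/- membership lemmas for `clspan` -/
section ClspanMem
variable {V : Type*} [NormedAddCommGroup V] [NormedSpace ℂ V]

lemma mem_clspan_iff {s : Set V} {x : V} :
    x ∈ clspan s ↔ x ∈ (Submodule.span ℂ s).topologicalClosure := by
  rw [clspan, ← Submodule.topologicalClosure_coe]
  exact SetLike.mem_coe.symm

lemma clspan_isClosed (s : Set V) : IsClosed (clspan s) := isClosed_closure
lemma clspan_zero_mem (s : Set V) : (0:V) ∈ clspan s := subset_closure (Submodule.zero_mem _)
lemma clspan_add_mem {s : Set V} {x y : V} (hx : x ∈ clspan s) (hy : y ∈ clspan s) :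
    x + y ∈ clspan s := by
  rw [mem_clspan_iff] at hx hy ⊢
  exact Submodule.add_mem _ hx hy
lemma clspan_smul_mem {s : Set V} (c : ℂ) {x : V} (hx : x ∈ clspan s) : c • x ∈ clspan s := by
  rw [mem_clspan_iff] at hx ⊢
  exact Submodule.smul_mem _ c hx
lemma clspan_self_subset (s : Set V) : s ⊆ clspan s :=
  fun _ hx => subset_closure (Submodule.subset_span hx)

end ClspanMem

namespace TensorData

variable {E : Corr A B} {F : Corr B C} {T : Corr A C} (td : TensorData E F T)

lemma norm_mk2_le (x : E.X) (y : F.X) : ‖td.mk2 x y‖ ≤ ‖x‖ * ‖y‖ := by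
  apply Corr.norm_le_of_sq_le_sq (norm_nonneg _) (by positivity)
  rw [T.norm_sq_ip, td.ip_mk]
  calc ‖F.ip y (F.la (E.ip x x) y)‖ ≤ ‖y‖ * ‖F.la (E.ip x x) y‖ := F.ip_bound _ _
    _ ≤ ‖y‖ * (‖E.ip x x‖ * ‖y‖) :=
        mul_le_mul_of_nonneg_left (F.la_bound _ _) (norm_nonneg _)
    _ ≤ ‖y‖ * (‖x‖ * ‖x‖ * ‖y‖) :=
        mul_le_mul_of_nonneg_left
          (mul_le_mul_of_nonneg_right (E.ip_bound x x) (norm_nonneg y)) (norm_nonneg y)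
    _ = (‖x‖ * ‖y‖) ^ 2 := by ring

/-- `x ↦ x ⊗ y` as a continuous linear map. -/
def mk2l (y : F.X) : E.X →L[ℂ] T.X :=
  LinearMap.mkContinuous
    { toFun := fun x => td.mk2 x y
      map_add' := fun x x' => td.add_l x x' y
      map_smul' := fun c x => td.smul_l c x y } ‖y‖
    (fun x => by rw [mul_comm]; exact td.norm_mk2_le x y)

@[simp] lemma mk2l_apply (y : F.X) (x : E.X) : td.mk2l y x = td.mk2 x y := rfl

/-- `y ↦ x ⊗ y` as a continuous linear map. -/
def mk2r (x : E.X) : F.X →L[ℂ] T.X :=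
  LinearMap.mkContinuous
    { toFun := fun y => td.mk2 x y
      map_add' := fun y y' => td.add_r x y y'
      map_smul' := fun c y => td.smul_r c x y } ‖x‖
    (fun y => td.norm_mk2_le x y)

@[simp] lemma mk2r_apply (x : E.X) (y : F.X) : td.mk2r x y = td.mk2 x y := rfl

lemma mk2_zero_left (y : F.X) : td.mk2 0 y = 0 := map_zero (td.mk2l y)
lemma mk2_zero_right (x : E.X) : td.mk2 x 0 = 0 := map_zero (td.mk2r x)

/-- If a closed `ℂ`-submodule-like set contains all elementary tensors, it is everything. -/
lemma univ_of_mem {D : Set T.X} (hD : IsClosed D) (h0 : (0:T.X) ∈ D)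
    (hadd : ∀ x ∈ D, ∀ y ∈ D, x + y ∈ D)
    (hsmul : ∀ (c : ℂ), ∀ x ∈ D, c • x ∈ D)
    (hmem : ∀ (x : E.X) (y : F.X), td.mk2 x y ∈ D) : D = Set.univ := by
  apply Set.eq_univ_of_univ_subset
  rw [← td.dense]
  apply clspan_subset_of hD h0 hadd hsmul
  rintro _ ⟨p, rfl⟩
  exact hmem p.1 p.2

/-- Elementary tensors with left entries from a total family are total. -/
lemma clspan_left {κ : Type u} (vv : κ → E.X) (h : clspan (Set.range vv) = Set.univ) :
    clspan (Set.range fun p : κ × F.X => td.mk2 (vv p.1) p.2) = Set.univ := by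
  set D := clspan (Set.range fun p : κ × F.X => td.mk2 (vv p.1) p.2) with hDdef
  have hDc : IsClosed D := isClosed_closure
  have h0 : (0 : T.X) ∈ D := clspan_zero_mem _
  have haddD : ∀ x ∈ D, ∀ y ∈ D, x + y ∈ D := fun x hx y hy => clspan_add_mem hx hy
  have hsmulD : ∀ (c : ℂ), ∀ x ∈ D, c • x ∈ D := fun c x hx => clspan_smul_mem c hx
  have hmem : ∀ (x : E.X) (y : F.X), td.mk2 x y ∈ D := by
    intro x y
    refine forall_mem_of_clspan h (isClosed_closure.preimage (td.mk2l y).continuous) ?_ ?_ ?_ ?_ x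
    · show td.mk2 0 y ∈ D
      rw [td.mk2_zero_left]; exact h0
    · intro x1 hx1 x2 hx2
      show td.mk2 (x1 + x2) y ∈ D
      rw [td.add_l]; exact haddD _ hx1 _ hx2
    · intro c x1 hx1
      show td.mk2 (c • x1) y ∈ D
      rw [td.smul_l]; exact hsmulD c _ hx1
    · rintro _ ⟨k, rfl⟩
      exact clspan_self_subset _ ⟨(k, y), rfl⟩
  exact td.univ_of_mem hDc h0 haddD hsmulD hmem

end TensorData


namespace PullCorr

variable {D : Type u} [NonUnitalCStarAlgebra D] {ψ : A → D} {Cc : Corr A D}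
variable (pc : PullCorr ψ Cc)

lemma norm_u (d : D) : ‖pc.u d‖ = ‖d‖ := by
  apply eq_of_sq_eq (norm_nonneg _) (norm_nonneg _)
  rw [Cc.norm_sq_ip, pc.ip, CStarRing.norm_star_mul_self, sq]

/-- `u` as a continuous linear map. -/
def uCLM : D →L[ℂ] Cc.X :=
  LinearMap.mkContinuous
    { toFun := pc.u
      map_add' := pc.add
      map_smul' := pc.smul } 1 (fun d => by show ‖pc.u d‖ ≤ 1 * ‖d‖; rw [pc.norm_u, one_mul])

@[simp] lemma uCLM_apply (d : D) : pc.uCLM d = pc.u d := rfl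

lemma u_continuous : Continuous pc.u := pc.uCLM.continuous

end PullCorr

namespace ReCorr

variable {D : Type u} [NonUnitalCStarAlgebra D] {W : Corr B D}
  {σ : C → (W.X →L[ℂ] W.X)} {W' : Corr C D} (rc : ReCorr W σ W')

lemma norm_w (ξ : W.X) : ‖rc.w ξ‖ = ‖ξ‖ := by
  apply eq_of_sq_eq (norm_nonneg _) (norm_nonneg _)
  rw [W'.norm_sq_ip, rc.ip_eq, W.norm_sq_ip]

/-- `w` as a continuous linear map. -/
def wCLM : W.X →L[ℂ] W'.X :=
  LinearMap.mkContinuous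
    { toFun := rc.w
      map_add' := rc.add
      map_smul' := rc.smul } 1 (fun ξ => by show ‖rc.w ξ‖ ≤ 1 * ‖ξ‖; rw [rc.norm_w, one_mul])

@[simp] lemma wCLM_apply (ξ : W.X) : rc.wCLM ξ = rc.w ξ := rfl

lemma w_continuous : Continuous rc.w := rc.wCLM.continuous

end ReCorr

namespace CorrIso

variable {E F : Corr A B} (U : CorrIso E F)

lemma norm_toFun (x : E.X) : ‖U.toFun x‖ = ‖x‖ := by
  apply eq_of_sq_eq (norm_nonneg _) (norm_nonneg _)
  rw [F.norm_sq_ip, U.map_ip, E.norm_sq_ip]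

/-- `toFun` as a continuous linear map. -/
def toCLM : E.X →L[ℂ] F.X :=
  LinearMap.mkContinuous
    { toFun := U.toFun
      map_add' := U.map_add
      map_smul' := U.map_smul } 1 (fun x => by show ‖U.toFun x‖ ≤ 1 * ‖x‖; rw [U.norm_toFun, one_mul])

@[simp] lemma toCLM_apply (x : E.X) : U.toCLM x = U.toFun x := rfl

lemma toFun_continuous : Continuous U.toFun := U.toCLM.continuous

end CorrIso

namespace CorrRep

variable {E : Corr A A} {D : Type u} [NonUnitalCStarAlgebra D] (R : CorrRep E D)

lemma π_zero : R.π 0 = 0 := by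
  have := R.π_add 0 0
  rw [add_zero] at this
  exact (left_eq_add.mp this)

/-- `π` as a non-unital star algebra homomorphism. -/
def πhom : A →⋆ₙₐ[ℂ] D :=
  { toFun := R.π
    map_smul' := R.π_smul
    map_zero' := R.π_zero
    map_add' := R.π_add
    map_mul' := R.π_mul
    map_star' := R.π_star }

@[simp] lemma πhom_apply (a : A) : R.πhom a = R.π a := rfl

lemma norm_π_le (a : A) : ‖R.π a‖ ≤ ‖a‖ :=
  NonUnitalStarAlgHom.norm_apply_le R.πhom a

lemma π_continuous : Continuous R.π := by
  have : Continuous R.πhom := AddMonoidHomClass.continuous_of_bound R.πhom 1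
    (fun a => by rw [one_mul]; exact R.norm_π_le a)
  exact this

lemma π_sub (a b : A) : R.π (a - b) = R.π a - R.π b := map_sub R.πhom a b

lemma norm_t_le (x : E.X) : ‖R.t x‖ ≤ ‖x‖ := by
  apply Corr.norm_le_of_sq_le_sq (norm_nonneg _) (norm_nonneg _)
  calc ‖R.t x‖ ^ 2 = ‖star (R.t x) * (R.t x)‖ := by
        rw [CStarRing.norm_star_mul_self, sq]
    _ = ‖R.π (E.ip x x)‖ := by rw [R.t_mul]
    _ ≤ ‖E.ip x x‖ := R.norm_π_le _
    _ = ‖x‖ ^ 2 := (E.norm_sq_ip x).symm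

/-- `t` as a continuous linear map. -/
def tCLM : E.X →L[ℂ] D :=
  LinearMap.mkContinuous
    { toFun := R.t
      map_add' := R.t_add
      map_smul' := R.t_smul } 1 (fun x => by show ‖R.t x‖ ≤ 1 * ‖x‖; rw [one_mul]; exact R.norm_t_le x)

@[simp] lemma tCLM_apply (x : E.X) : R.tCLM x = R.t x := rfl

lemma t_continuous : Continuous R.t := R.tCLM.continuous

/-- The representation respects the right module action: `t(x·b) = t(x)π(b)`. -/
lemma t_sm (x : E.X) (b : A) : R.t (E.sm x b) = R.t x * R.π b := by
  set z := R.t (E.sm x b) - R.t x * R.π b with hz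
  have hip1 : E.ip (E.sm x b) (E.sm x b) = star b * E.ip x x * b := by
    rw [E.ip_sm]
    congr 1
    rw [← E.ip_star, E.ip_sm, star_mul, E.ip_star]
  have hip2 : E.ip x (E.sm x b) = E.ip x x * b := E.ip_sm x x b
  have hip3 : E.ip (E.sm x b) x = star b * E.ip x x := by
    rw [← E.ip_star, E.ip_sm, star_mul, E.ip_star]
  have e1 : star (R.t (E.sm x b)) * R.t (E.sm x b) = R.π (star b * E.ip x x * b) := by
    rw [R.t_mul, hip1]
  have e2 : star (R.t (E.sm x b)) * (R.t x * R.π b) = R.π (star b * E.ip x x * b) := by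
    rw [← mul_assoc, R.t_mul, hip3, ← R.π_mul]
  have e3 : (R.π (star b) * star (R.t x)) * R.t (E.sm x b) = R.π (star b * E.ip x x * b) := by
    rw [mul_assoc, R.t_mul, hip2, ← R.π_mul, ← mul_assoc]
  have e4 : (R.π (star b) * star (R.t x)) * (R.t x * R.π b)
      = R.π (star b * E.ip x x * b) := by
    have h1 : star (R.t x) * (R.t x * R.π b) = R.π (E.ip x x * b) := by
      rw [← mul_assoc, R.t_mul, ← R.π_mul]
    rw [mul_assoc, h1, ← R.π_mul, ← mul_assoc]
  have expand : star z * z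
      = (star (R.t (E.sm x b)) * R.t (E.sm x b))
        - (star (R.t (E.sm x b)) * (R.t x * R.π b))
        - ((R.π (star b) * star (R.t x)) * R.t (E.sm x b))
        + ((R.π (star b) * star (R.t x)) * (R.t x * R.π b)) := by
    rw [hz, star_sub, star_mul, ← R.π_star]
    rw [sub_mul, mul_sub, mul_sub]
    abel
  have hzz : star z * z = 0 := by
    rw [expand, e1, e2, e3, e4]
    abel
  have hn : ‖z‖ ^ 2 = ‖star z * z‖ := by rw [CStarRing.norm_star_mul_self, sq]
  have hz0 : z = 0 := by
    rw [hzz, norm_zero] at hn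
    exact norm_eq_zero.mp (sq_eq_zero_iff.mp hn)
  exact sub_eq_zero.mp hz0

end CorrRep

/-- Main assembly: an inner-product preserving, action-intertwining continuous linear map
with dense range gives an isomorphism of correspondences. -/
lemma Corr.iso_of_clm {R S : Type u} [NonUnitalCStarAlgebra R] [NonUnitalCStarAlgebra S]
    (P Q : Corr R S) (F : P.X →L[ℂ] Q.X)
    (hip : ∀ x y, Q.ip (F x) (F y) = P.ip x y)
    (hla : ∀ (r : R) (x : P.X), F (P.la r x) = Q.la r (F x))
    (hdense : DenseRange F) : Nonempty (CorrIso P Q) := by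
  have hnorm : ∀ x, ‖F x‖ = ‖x‖ := by
    intro x
    apply eq_of_sq_eq (norm_nonneg _) (norm_nonneg _)
    rw [Q.norm_sq_ip, hip, P.norm_sq_ip]
  have hinj : Function.Injective F := by
    intro x y hxy
    have : ‖x - y‖ = 0 := by rw [← hnorm, map_sub, hxy, sub_self, norm_zero]
    exact sub_eq_zero.mp (norm_eq_zero.mp this)
  have hiso : Isometry F := AddMonoidHomClass.isometry_of_norm F hnorm
  have hclosed : IsClosed (Set.range F) := hiso.isUniformInducing.isComplete_range.isClosed
  have hsurj : Function.Surjective F := by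
    intro y
    have : y ∈ closure (Set.range F) := hdense y
    rw [hclosed.closure_eq] at this
    exact this
  exact ⟨{ toFun := F
           invFun := Function.invFun F
           left_inv := Function.leftInverse_invFun hinj
           right_inv := Function.rightInverse_invFun hsurj
           map_add := map_add F
           map_smul := map_smul F
           map_la := hla
           map_ip := hip }⟩

end StructureMaps

end
noncomputable section
universe u

section CFCLemmas

lemma lt_of_sq_lt_sq {a b : ℝ} (ha : 0 ≤ a) (hb : 0 ≤ b) (h : a ^ 2 < b ^ 2) : a < b := by
  nlinarith

/-- Core approximation: for a selfadjoint `q`, the expression `q - qb - bq + bqb` can be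
made arbitrarily small with `b` selfadjoint (an approximate-unit trick using `cfcₙ`). -/
lemma core_cfc {D : Type u} [NonUnitalCStarAlgebra D] (q : D) (hq : IsSelfAdjoint q)
    {ε : ℝ} (hε : 0 < ε) :
    ∃ b : D, IsSelfAdjoint b ∧ ‖q - q * b - b * q + b * q * b‖ < ε := by
  obtain ⟨n, hn⟩ := exists_nat_gt (1/ε)
  set s : ℝ := (n : ℝ) + 1 with hs
  have hs0 : 0 < s := by positivity
  have hsε : 1/s < ε := by
    rw [div_lt_iff₀ hs0]
    have h1 : 1/ε < s := by rw [hs]; exact hn.trans (lt_add_one _)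
    rw [div_lt_iff₀ hε] at h1
    linarith
  set f : ℝ → ℝ := fun t => s * |t| / (1 + s * |t|) with hf
  have hden : ∀ t : ℝ, (0:ℝ) < 1 + s * |t| := by
    intro t
    have : 0 ≤ s * |t| := by positivity
    linarith
  have hfc : Continuous f := by
    apply Continuous.div
    · fun_prop
    · fun_prop
    · exact fun t => (hden t).ne'
  have hf0 : f 0 = 0 := by simp [hf]
  set b : D := cfcₙ f q with hb
  have hbsa : IsSelfAdjoint b := cfcₙ_predicate f q
  refine ⟨b, hbsa, ?_⟩
  have h2 : cfcₙ (fun t : ℝ => t * f t) q = q * b := by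
    rw [cfcₙ_mul (fun t : ℝ => t) f q (continuous_id.continuousOn) rfl
      (hfc.continuousOn) hf0, cfcₙ_id' ℝ q]
  have h3 : cfcₙ (fun t : ℝ => f t * t) q = b * q := by
    rw [cfcₙ_mul f (fun t : ℝ => t) q (hfc.continuousOn) hf0
      (continuous_id.continuousOn) rfl, cfcₙ_id' ℝ q]
  have h4 : cfcₙ (fun t : ℝ => f t * t * f t) q = b * q * b := by
    rw [cfcₙ_mul (fun t : ℝ => f t * t) f q
      ((hfc.mul continuous_id).continuousOn) (by simp [hf0])
      (hfc.continuousOn) hf0, h3]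
  have h5 : cfcₙ (fun t : ℝ => t - t * f t - f t * t) q = q - q * b - b * q := by
    rw [cfcₙ_sub (fun t : ℝ => t - t * f t) (fun t : ℝ => f t * t) q
      ((continuous_id.sub (continuous_id.mul hfc)).continuousOn) (by simp [hf0])
      ((hfc.mul continuous_id).continuousOn) (by simp [hf0]), h3]
    congr 1
    rw [cfcₙ_sub (fun t : ℝ => t) (fun t : ℝ => t * f t) q
      (continuous_id.continuousOn) rfl
      ((continuous_id.mul hfc).continuousOn) (by simp [hf0]), h2, cfcₙ_id' ℝ q]
  have h6 : cfcₙ (fun t : ℝ => t - t * f t - f t * t + f t * t * f t) q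
      = q - q * b - b * q + b * q * b := by
    rw [cfcₙ_add (fun t : ℝ => t - t * f t - f t * t) (fun t : ℝ => f t * t * f t) q
      ((continuous_id.sub (continuous_id.mul hfc) |>.sub (hfc.mul continuous_id)).continuousOn)
      (by simp [hf0])
      (((hfc.mul continuous_id).mul hfc).continuousOn) (by simp [hf0]), h5, h4]
  have hbound : ∀ t : ℝ, ‖t - t * f t - f t * t + f t * t * f t‖ ≤ 1/s := by
    intro t
    have hft : f t = s * |t| / (1 + s * |t|) := rfl
    have hne := (hden t).ne'
    have hexp : t - t * f t - f t * t + f t * t * f t = t * (1 - f t)^2 := by ring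
    have h1f : 1 - f t = 1 / (1 + s * |t|) := by
      rw [hft]; field_simp; ring
    rw [hexp, h1f, Real.norm_eq_abs]
    rw [abs_mul, abs_pow, abs_div, abs_one]
    rw [abs_of_pos (hden t)]
    rw [div_pow, one_pow]
    rw [show |t| * (1 / (1 + s * |t|) ^ 2) = |t| / (1 + s * |t|) ^ 2 from by ring]
    rw [div_le_div_iff₀ (by positivity) hs0]
    have habs : 0 ≤ |t| := abs_nonneg t
    nlinarith [sq_nonneg (1 - s * |t|), sq_nonneg (1 + s * |t|)]
  calc ‖q - q * b - b * q + b * q * b‖ = ‖cfcₙ (fun t : ℝ => t - t * f t - f t * t + f t * t * f t) q‖ := by rw [h6]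
    _ ≤ 1/s := norm_cfcₙ_le (fun t _ => hbound t)
    _ < ε := hsε

/-- Left approximate factorization in a C*-algebra. -/
lemma approx_left_mul {D : Type u} [NonUnitalCStarAlgebra D] (a : D) {ε : ℝ} (hε : 0 < ε) :
    ∃ b : D, ‖a - b * a‖ < ε := by
  have hq : IsSelfAdjoint (a * star a) := IsSelfAdjoint.mul_star_self a
  obtain ⟨b, hbsa, hb⟩ := core_cfc (a * star a) hq (ε := ε^2) (by positivity)
  refine ⟨b, ?_⟩
  have key : (a - b * a) * star (a - b * a)
      = (a * star a) - (a * star a) * b - b * (a * star a) + b * (a * star a) * b := by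
    rw [star_sub, star_mul, hbsa.star_eq]
    noncomm_ring
  have hnorm : ‖a - b * a‖ ^ 2 = ‖(a - b * a) * star (a - b * a)‖ := by
    rw [CStarRing.norm_self_mul_star, sq]
  apply lt_of_sq_lt_sq (norm_nonneg _) hε.le
  rw [hnorm, key]
  exact hb

/-- Right nondegeneracy of a Hilbert module: `x ≈ x · b`. -/
lemma Corr.approx_sm {A B : Type u} [NonUnitalCStarAlgebra A] [NonUnitalCStarAlgebra B]
    (E : Corr A B) (x : E.X) {ε : ℝ} (hε : 0 < ε) :
    ∃ b : B, ‖x - E.sm x b‖ < ε := by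
  have hq : IsSelfAdjoint (E.ip x x) := E.ip_star x x
  obtain ⟨b, hbsa, hb⟩ := core_cfc (E.ip x x) hq (ε := ε^2) (by positivity)
  refine ⟨b, ?_⟩
  set q := E.ip x x with hqdef
  have hip2 : E.ip x (E.sm x b) = q * b := E.ip_sm x x b
  have hip3 : E.ip (E.sm x b) x = b * q := by
    rw [← E.ip_star, E.ip_sm, star_mul, hbsa.star_eq, E.ip_star]
  have hip1 : E.ip (E.sm x b) (E.sm x b) = b * q * b := by
    rw [E.ip_sm, hip3]
  have key : E.ip (x - E.sm x b) (x - E.sm x b) = q - q * b - b * q + b * q * b := by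
    rw [E.ip_sub, E.ip_sub_left, E.ip_sub_left, hip1, hip2, hip3, ← hqdef]
    abel
  apply lt_of_sq_lt_sq (norm_nonneg _) hε.le
  rw [E.norm_sq_ip, key]
  exact hb

/-- Density of `π(A)·O` in a Cuntz–Pimsner algebra. -/
lemma CuntzPimsner.dense_pi_mul {A : Type u} [NonUnitalCStarAlgebra A] {E : Corr A A}
    (CP : CuntzPimsner E) :
    clspan {z : CP.O | ∃ (a : A) (S : CP.O), z = CP.rep.π a * S} = Set.univ := by
  set gens : Set CP.O := {z : CP.O | ∃ (a : A) (S : CP.O), z = CP.rep.π a * S} with hgens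
  set Dcl := clspan gens with hDcl
  have hDclosed : IsClosed Dcl := clspan_isClosed _
  -- right ideal
  have hri : ∀ z ∈ Dcl, ∀ T : CP.O, z * T ∈ Dcl := by
    intro z hz T
    revert z hz
    have : Dcl ⊆ {z : CP.O | z * T ∈ Dcl} := by
      apply clspan_subset_of
      · exact (clspan_isClosed gens).preimage (continuous_id.mul continuous_const)
      · show (0:CP.O) * T ∈ Dcl; rw [zero_mul]; exact clspan_zero_mem _
      · intro x hx y hy; show (x + y) * T ∈ Dcl; rw [add_mul]
        exact clspan_add_mem hx hy
      · intro c x hx; show (c • x) * T ∈ Dcl; rw [smul_mul_assoc]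
        exact clspan_smul_mem c hx
      · rintro _ ⟨a, S, rfl⟩
        show (CP.rep.π a * S) * T ∈ Dcl
        rw [mul_assoc]
        exact clspan_self_subset _ ⟨a, S * T, rfl⟩
    exact fun z hz => this hz
  -- π a ∈ Dcl
  have hπ : ∀ a : A, CP.rep.π a ∈ Dcl := by
    intro a
    have : CP.rep.π a ∈ closure gens := by
      rw [Metric.mem_closure_iff]
      intro ε hε
      obtain ⟨b, hb⟩ := approx_left_mul a hε
      have h1 : ‖CP.rep.π a - CP.rep.π b * CP.rep.π a‖ < ε := by
        rw [← CP.rep.π_mul, ← CP.rep.π_sub]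
        exact lt_of_le_of_lt (CP.rep.norm_π_le _) hb
      exact ⟨CP.rep.π b * CP.rep.π a, ⟨b, CP.rep.π a, rfl⟩, by rwa [dist_eq_norm]⟩
    exact (hDclosed.closure_subset_iff.mpr (clspan_self_subset gens)) this
  -- t x ∈ Dcl
  have ht : ∀ x : E.X, CP.rep.t x ∈ Dcl := by
    refine forall_mem_of_clspan E.nondeg
      ((clspan_isClosed gens).preimage CP.rep.t_continuous) ?_ ?_ ?_ ?_
    · show CP.rep.t 0 ∈ Dcl
      rw [show CP.rep.t (0 : E.X) = 0 from map_zero CP.rep.tCLM]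
      exact clspan_zero_mem _
    · intro x hx y hy; show CP.rep.t (x + y) ∈ Dcl; rw [CP.rep.t_add]
      exact clspan_add_mem hx hy
    · intro c x hx; show CP.rep.t (c • x) ∈ Dcl; rw [CP.rep.t_smul]
      exact clspan_smul_mem c hx
    · rintro _ ⟨a, y, rfl⟩
      show CP.rep.t (E.la a y) ∈ Dcl
      rw [← CP.rep.mul_t]
      exact clspan_self_subset _ ⟨a, CP.rep.t y, rfl⟩
  -- star (t x) ∈ Dcl
  have hts : ∀ x : E.X, star (CP.rep.t x) ∈ Dcl := by
    intro x
    have hclosedset : IsClosed {y : E.X | star (CP.rep.t y) ∈ Dcl} :=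
      (clspan_isClosed gens).preimage (continuous_star.comp CP.rep.t_continuous)
    have hmem : ∀ (y : E.X) (b : A), E.sm y b ∈ {y : E.X | star (CP.rep.t y) ∈ Dcl} := by
      intro y b
      show star (CP.rep.t (E.sm y b)) ∈ Dcl
      rw [CP.rep.t_sm, star_mul, ← CP.rep.π_star]
      exact clspan_self_subset _ ⟨star b, star (CP.rep.t y), rfl⟩
    have hxc : x ∈ closure {y : E.X | ∃ (y' : E.X) (b : A), y = E.sm y' b} := by
      rw [Metric.mem_closure_iff]
      intro ε hε
      obtain ⟨b, hb⟩ := E.approx_sm x hε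
      exact ⟨E.sm x b, ⟨x, b, rfl⟩, by rwa [dist_eq_norm]⟩
    have hsub : {y : E.X | ∃ (y' : E.X) (b : A), y = E.sm y' b}
        ⊆ {y : E.X | star (CP.rep.t y) ∈ Dcl} := by
      rintro _ ⟨y', b, rfl⟩; exact hmem y' b
    exact (hclosedset.closure_subset_iff.mpr hsub) hxc
  -- all elements of the generated star subalgebra lie in Dcl
  have hadj : ∀ z ∈ (NonUnitalStarAlgebra.adjoin ℂ
      (Set.range CP.rep.π ∪ Set.range CP.rep.t) :
        NonUnitalStarSubalgebra ℂ CP.O), z ∈ Dcl ∧ star z ∈ Dcl := by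
    intro z hz
    induction hz using NonUnitalStarAlgebra.adjoin_induction with
    | mem x hx =>
      rcases hx with hx | hx
      · obtain ⟨a, rfl⟩ := hx
        exact ⟨hπ a, by rw [← CP.rep.π_star]; exact hπ (star a)⟩
      · obtain ⟨y, rfl⟩ := hx
        exact ⟨ht y, hts y⟩
    | add x y hx hy ihx ihy =>
      exact ⟨clspan_add_mem ihx.1 ihy.1,
        by rw [star_add]; exact clspan_add_mem ihx.2 ihy.2⟩
    | zero => exact ⟨clspan_zero_mem _, by rw [star_zero]; exact clspan_zero_mem _⟩
    | mul x y hx hy ihx ihy =>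
      refine ⟨hri _ ihx.1 y, ?_⟩
      rw [star_mul]
      exact hri _ ihy.2 (star x)
    | smul c x hx ihx =>
      exact ⟨clspan_smul_mem c ihx.1,
        by rw [star_smul]; exact clspan_smul_mem _ ihx.2⟩
    | star x hx ihx => exact ⟨ihx.2, by rw [star_star]; exact ihx.1⟩
  apply Set.eq_univ_of_univ_subset
  have hgen := CP.generates
  have : closure ((NonUnitalStarAlgebra.adjoin ℂ
      (Set.range CP.rep.π ∪ Set.range CP.rep.t) :
        NonUnitalStarSubalgebra ℂ CP.O) : Set CP.O) = Set.univ := hgen.closure_eq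
  rw [← this]
  apply hDclosed.closure_subset_iff.mpr
  intro z hz
  exact (hadj z hz).1

end CFCLemmas

end
noncomputable section
universe u

section MoreHelpers

variable {V : Type*} [NormedAddCommGroup V] [NormedSpace ℂ V]

lemma clspan_univ : clspan (Set.univ : Set V) = Set.univ :=
  Set.eq_univ_of_univ_subset (clspan_self_subset _)

lemma clspan_range_surj {α : Type*} (f : α → V) (h : Function.Surjective f) :
    clspan (Set.range f) = Set.univ := by rw [h.range_eq]; exact clspan_univ

variable {A B : Type u} [NonUnitalCStarAlgebra A] [NonUnitalCStarAlgebra B]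

lemma Corr.continuous_ip_right (E : Corr A B) (z : E.X) :
    Continuous (fun x => E.ip z x) := (E.ipCLM z).continuous

lemma Corr.continuous_ip_left (E : Corr A B) (z : E.X) :
    Continuous (fun x => E.ip x z) := by
  have : (fun x => E.ip x z) = (fun x => star (E.ip z x)) := by
    funext x; rw [E.ip_star]
  rw [this]
  exact continuous_star.comp (E.ipCLM z).continuous

end MoreHelpers

section Part2

variable {A : Type u} [NonUnitalCStarAlgebra A]

lemma part2_iso (E : Corr A A) (e : EMor E E) (hid : EIsIdentity e)
    (CPX : CuntzPimsner E) (ste : CCovSetup e CPX) (sde : SigmaData ste CPX)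
    (We : Corr CPX.O CPX.O) (rc : ReCorr ste.W sde.σ We)
    (OXid : Corr CPX.O CPX.O) (pc : PullCorr (fun S : CPX.O => S) OXid) :
    Nonempty (CorrIso We OXid) := by
  obtain ⟨idd, il, hil_add, hil_smul, hil_cont, _hil_inj, hil_la, hil_U⟩ := hid
  set vvec : A × CPX.O → We.X :=
    fun p => rc.w (ste.tdW.mk2 (idd.u p.1) (ste.pcY.u p.2)) with hvvec
  set gvec : A × CPX.O → OXid.X := fun p => pc.u (CPX.rep.π p.1 * p.2) with hgvec
  -- termwise inner products agree
  have hipvg : ∀ i j, OXid.ip (gvec i) (gvec j) = We.ip (vvec i) (vvec j) := by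
    rintro ⟨a, S⟩ ⟨a', S'⟩
    show OXid.ip (pc.u (CPX.rep.π a * S)) (pc.u (CPX.rep.π a' * S'))
      = We.ip (rc.w (ste.tdW.mk2 (idd.u a) (ste.pcY.u S)))
          (rc.w (ste.tdW.mk2 (idd.u a') (ste.pcY.u S')))
    rw [pc.ip, rc.ip_eq, ste.tdW.ip_mk, idd.ip, ste.pcY.la, ste.pcY.ip]
    rw [star_mul, CPX.rep.π_mul, ← CPX.rep.π_star]
    simp [mul_assoc]
  -- density of the spanning family
  have hvdense : clspan (Set.range vvec) = Set.univ := by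
    have h1 : clspan (Set.range fun q : A × ste.OYc.X => ste.tdW.mk2 (idd.u q.1) q.2)
        = Set.univ := ste.tdW.clspan_left idd.u (clspan_range_surj idd.u idd.bij.2)
    have h2 : Set.range (fun p : A × CPX.O => ste.tdW.mk2 (idd.u p.1) (ste.pcY.u p.2))
        = Set.range (fun q : A × ste.OYc.X => ste.tdW.mk2 (idd.u q.1) q.2) := by
      apply clspan_range_comp_surjective (fun q : A × ste.OYc.X => ste.tdW.mk2 (idd.u q.1) q.2)
        (fun p : A × CPX.O => ((p.1 : A), ste.pcY.u p.2))
      rintro ⟨a, y⟩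
      obtain ⟨S, rfl⟩ := ste.pcY.bij.2 y
      exact ⟨(a, S), rfl⟩
    have h3 : Set.range vvec
        = rc.wCLM '' Set.range (fun p : A × CPX.O =>
            ste.tdW.mk2 (idd.u p.1) (ste.pcY.u p.2)) := by
      rw [hvvec, ← Set.range_comp]
      rfl
    rw [h3]
    apply clspan_image rc.wCLM
    · intro y; obtain ⟨ξ, rfl⟩ := rc.bij.2 y; exact ⟨ξ, rfl⟩
    · rw [h2]; exact h1
  -- the continuous linear map
  obtain ⟨F, hF, _hFb⟩ := Corr.ext_clm We vvec gvec 1 one_pos.le hvdense (by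
    have hb := Corr.bound_of_dom We OXid vvec gvec (fun x => x) 1 one_pos.le
      (fun _ _ => rfl) (fun _ _ => rfl) (fun x => by rw [one_mul]) hipvg
    intro s c
    have h := hb s c
    rwa [Real.sqrt_one] at h)
  have hFraw : ∀ (a : A) (S : CPX.O),
      F (rc.w (ste.tdW.mk2 (idd.u a) (ste.pcY.u S))) = pc.u (CPX.rep.π a * S) :=
    fun a S => hF (a, S)
  -- map_ip
  have hmapip : ∀ x y, OXid.ip (F x) (F y) = We.ip x y := by
    have inner : ∀ i : A × CPX.O, ∀ x, OXid.ip (F x) (gvec i) = We.ip x (vvec i) := by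
      intro i
      apply eq_of_clspan hvdense (fun c => starRingEnd ℂ c)
      · exact (OXid.continuous_ip_left (gvec i)).comp F.continuous
      · exact We.continuous_ip_left (vvec i)
      · intro x y; simp only [map_add, OXid.ip_add_left]
      · intro x y; simp only [We.ip_add_left]
      · intro c x; simp only [map_smul, OXid.ip_smul_left]
      · intro c x; simp only [We.ip_smul_left]
      · rintro _ ⟨j, rfl⟩
        show OXid.ip (F (vvec j)) (gvec i) = We.ip (vvec j) (vvec i)
        rw [hF j]
        exact hipvg j i
    intro x
    apply eq_of_clspan hvdense (fun c => c)
    · exact (OXid.continuous_ip_right (F x)).comp F.continuous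
    · exact We.continuous_ip_right x
    · intro y z; simp only [map_add, OXid.ip_add]
    · intro y z; simp only [We.ip_add]
    · intro c y; simp only [map_smul, OXid.ip_smul]
    · intro c y; simp only [We.ip_smul]
    · rintro _ ⟨i, rfl⟩
      show OXid.ip (F x) (F (vvec i)) = We.ip x (vvec i)
      rw [hF i]
      exact inner i x
  -- dense range
  have hgdense : clspan (Set.range gvec) = Set.univ := by
    have h1 : Set.range gvec
        = pc.uCLM '' {z : CPX.O | ∃ (a : A) (S : CPX.O), z = CPX.rep.π a * S} := by
      ext y; constructor
      · rintro ⟨⟨a, S⟩, rfl⟩; exact ⟨CPX.rep.π a * S, ⟨a, S, rfl⟩, rfl⟩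
      · rintro ⟨z, ⟨a, S, rfl⟩, rfl⟩; exact ⟨(a, S), rfl⟩
    rw [h1]
    apply clspan_image pc.uCLM
    · intro y; obtain ⟨d, rfl⟩ := pc.bij.2 y; exact ⟨d, rfl⟩
    · exact CPX.dense_pi_mul
  have hdenseF : DenseRange F := by
    rw [denseRange_iff_closure_range]
    apply Set.eq_univ_of_univ_subset
    rw [← hgdense]
    have hle : Submodule.span ℂ (Set.range gvec) ≤ LinearMap.range (F : We.X →ₗ[ℂ] OXid.X) :=
      Submodule.span_le.mpr (by rintro _ ⟨i, rfl⟩; exact ⟨vvec i, hF i⟩)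
    have hspan : ((Submodule.span ℂ (Set.range gvec) : Submodule ℂ OXid.X) : Set OXid.X)
        ⊆ Set.range F := by
      intro z hz
      obtain ⟨x, hx⟩ := hle hz
      exact ⟨x, hx⟩
    exact closure_mono hspan
  -- the good set for the left action
  set Good : Set CPX.O := {S : CPX.O | ∀ x : We.X, F (We.la S x) = OXid.la S (F x)}
    with hGood
  have hGoodClosed : IsClosed Good := by
    have h0 : Good = ⋂ x : We.X, {S : CPX.O | F (We.la S x) = OXid.la S (F x)} := by
      ext S; simp [hGood, Set.mem_iInter]
    rw [h0]
    apply isClosed_iInter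
    intro x
    apply isClosed_eq
    · exact F.continuous.comp (We.laCLM x).continuous
    · exact (OXid.laCLM (F x)).continuous
  have goodOf : ∀ S₀ : CPX.O,
      (∀ i : A × CPX.O, F (We.la S₀ (vvec i)) = OXid.la S₀ (F (vvec i))) → S₀ ∈ Good := by
    intro S₀ h
    show ∀ x : We.X, F (We.la S₀ x) = OXid.la S₀ (F x)
    apply eq_of_clspan hvdense (fun c => c)
    · exact F.continuous.comp (We.lmul S₀).continuous
    · exact (OXid.lmul S₀).continuous.comp F.continuous
    · intro x y; simp only [We.la_add, map_add]
    · intro x y; simp only [map_add, OXid.la_add]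
    · intro c x; simp only [We.la_smul, map_smul]
    · intro c x; simp only [map_smul, OXid.la_smul]
    · rintro _ ⟨i, rfl⟩; exact h i
  -- beta-reduced forms of the pullback actions
  have hiddla : ∀ (a₀ : A) (d : A), e.M.la a₀ (idd.u d) = idd.u (a₀ * d) :=
    fun a₀ d => idd.la a₀ d
  have hpcla : ∀ (c : CPX.O) (d : CPX.O), OXid.la c (pc.u d) = pc.u (c * d) :=
    fun c d => pc.la c d
  -- the key identity for Λ
  have hILam : ∀ (S : CPX.O) (ζ : e.TMY.X),
      F (rc.w (ste.Λ ζ S)) = pc.u (CPX.rep.t (il ζ) * S) := by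
    intro S
    have hζdense : clspan (Set.range fun p : A × E.X => e.tdMY.mk2 (idd.u p.1) p.2)
        = Set.univ := e.tdMY.clspan_left idd.u (clspan_range_surj idd.u idd.bij.2)
    apply eq_of_clspan hζdense (fun c => c)
    · exact (F.continuous.comp rc.w_continuous).comp (ste.Λ_cont S)
    · exact pc.u_continuous.comp ((continuous_mul_right S).comp
        (CPX.rep.t_continuous.comp hil_cont))
    · intro x y; simp only [ste.Λ_add S, rc.add, map_add]
    · intro x y; simp only [hil_add, CPX.rep.t_add, add_mul, pc.add]
    · intro c x; simp only [ste.Λ_smul S, rc.smul, map_smul]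
    · intro c x; simp only [hil_smul, CPX.rep.t_smul, smul_mul_assoc, pc.smul]
    rintro _ ⟨⟨b, y⟩, rfl⟩
    show F (rc.w (ste.Λ (e.tdMY.mk2 (idd.u b) y) S))
      = pc.u (CPX.rep.t (il (e.tdMY.mk2 (idd.u b) y)) * S)
    rw [ste.Λ_mk, hil_la, hFraw b (CPX.rep.t y * S)]
    rw [show CPX.rep.t (E.la b y) = CPX.rep.π b * CPX.rep.t y from (CPX.rep.mul_t b y).symm,
      mul_assoc]
  -- base case: π a₀
  have hπGood : ∀ a₀ : A, CPX.rep.π a₀ ∈ Good := by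
    intro a₀
    apply goodOf
    rintro ⟨a, S⟩
    show F (We.la (CPX.rep.π a₀) (rc.w (ste.tdW.mk2 (idd.u a) (ste.pcY.u S))))
      = OXid.la (CPX.rep.π a₀) (F (rc.w (ste.tdW.mk2 (idd.u a) (ste.pcY.u S))))
    rw [rc.la_eq, sde.σ_π a₀, ste.W.lmul_apply, ste.tdW.la_mk, hiddla,
      hFraw (a₀ * a) S, hFraw a S, hpcla, CPX.rep.π_mul, mul_assoc]
  -- base case: t x₀
  have htGood : ∀ x₀ : E.X, CPX.rep.t x₀ ∈ Good := by
    intro x₀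
    apply goodOf
    rintro ⟨a, S⟩
    show F (We.la (CPX.rep.t x₀) (rc.w (ste.tdW.mk2 (idd.u a) (ste.pcY.u S))))
      = OXid.la (CPX.rep.t x₀) (F (rc.w (ste.tdW.mk2 (idd.u a) (ste.pcY.u S))))
    rw [rc.la_eq, sde.σ_t x₀, ste.Φ_mk x₀ (idd.u a) S, hILam S _, hil_U x₀ a,
      CPX.rep.t_sm x₀ a, hFraw a S, hpcla, mul_assoc]
  -- algebraic closure properties of Good
  have hZero : (0 : CPX.O) ∈ Good := by
    intro x
    rw [We.la_zero_left, map_zero, OXid.la_zero_left]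
  have hAdd : ∀ S T : CPX.O, S ∈ Good → T ∈ Good → S + T ∈ Good := by
    intro S T hS hT x
    rw [We.la_add', map_add, hS x, hT x, OXid.la_add']
  have hSmul : ∀ (c : ℂ) (S : CPX.O), S ∈ Good → c • S ∈ Good := by
    intro c S hS x
    rw [We.la_smul', map_smul, hS x, OXid.la_smul']
  have hMul : ∀ S T : CPX.O, S ∈ Good → T ∈ Good → S * T ∈ Good := by
    intro S T hS hT x
    rw [We.la_mul, hS _, hT x, ← OXid.la_mul]
  have hStar : ∀ S : CPX.O, S ∈ Good → star S ∈ Good := by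
    intro S hS x
    apply OXid.ext_of_ip
    apply eq_of_clspan hgdense (fun c => starRingEnd ℂ c)
    · exact OXid.continuous_ip_left _
    · exact OXid.continuous_ip_left _
    · intro y z; simp only [OXid.ip_add_left]
    · intro y z; simp only [OXid.ip_add_left]
    · intro c y; simp only [OXid.ip_smul_left]
    · intro c y; simp only [OXid.ip_smul_left]
    rintro _ ⟨i, rfl⟩
    rw [← hF i]
    calc OXid.ip (F (vvec i)) (F (We.la (star S) x))
        = We.ip (vvec i) (We.la (star S) x) := hmapip _ _
      _ = We.ip (We.la S (vvec i)) x := (We.la_adj S (vvec i) x).symm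
      _ = OXid.ip (F (We.la S (vvec i))) (F x) := (hmapip _ _).symm
      _ = OXid.ip (OXid.la S (F (vvec i))) (F x) := by rw [hS (vvec i)]
      _ = OXid.ip (F (vvec i)) (OXid.la (star S) (F x)) := OXid.la_adj S _ _
  -- all of O_X is good
  have hGoodAll : ∀ S : CPX.O, S ∈ Good := by
    have hadj : ∀ z ∈ (NonUnitalStarAlgebra.adjoin ℂ
        (Set.range CPX.rep.π ∪ Set.range CPX.rep.t) :
          NonUnitalStarSubalgebra ℂ CPX.O), z ∈ Good := by
      intro z hz
      induction hz using NonUnitalStarAlgebra.adjoin_induction with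
      | mem x hx =>
        rcases hx with hx | hx
        · obtain ⟨a, rfl⟩ := hx; exact hπGood a
        · obtain ⟨y, rfl⟩ := hx; exact htGood y
      | add x y hx hy ihx ihy => exact hAdd x y ihx ihy
      | zero => exact hZero
      | mul x y hx hy ihx ihy => exact hMul x y ihx ihy
      | smul c x hx ihx => exact hSmul c x ihx
      | star x hx ihx => exact hStar x ihx
    intro S
    have h2 : (Set.univ : Set CPX.O) ⊆ Good := by
      rw [← CPX.generates.closure_eq]
      exact hGoodClosed.closure_subset_iff.mpr hadj
    exact h2 (Set.mem_univ S)
  exact Corr.iso_of_clm We OXid F hmapip (fun r x => hGoodAll r x) hdenseF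

end Part2

end
noncomputable section
universe u

section Part1

variable {A B C : Type u} [NonUnitalCStarAlgebra A] [NonUnitalCStarAlgebra B]
  [NonUnitalCStarAlgebra C]

lemma part1_iso (E : Corr A A) (F : Corr B B) (G : Corr C C)
    (m : EMor E F) (n : EMor F G) (p : EMor E G) (hcomp : EIsComposite m n p)
    (CPX : CuntzPimsner E) (CPY : CuntzPimsner F) (CPZ : CuntzPimsner G)
    (stm : CCovSetup m CPY) (sdm : SigmaData stm CPX)
    (stn : CCovSetup n CPZ) (sdn : SigmaData stn CPY)
    (stp : CCovSetup p CPZ) (sdp : SigmaData stp CPX)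
    (W₁ : Corr CPX.O CPY.O) (rc₁ : ReCorr stm.W sdm.σ W₁)
    (W₂ : Corr CPY.O CPZ.O) (rc₂ : ReCorr stn.W sdn.σ W₂)
    (V : Corr CPX.O CPZ.O) (rcV : ReCorr stp.W sdp.σ V)
    (T : Corr CPX.O CPZ.O) (tdT : TensorData W₁ W₂ T) :
    Nonempty (CorrIso T V) := by
  obtain ⟨td, Ξ, Θ, hΞlin, hΞmk, hΘlin, hΘmk, hU⟩ := hcomp
  -- density of the elementary family in stn.W
  have hvκdense : clspan (Set.range fun q : n.M.X × CPZ.O =>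
      stn.tdW.mk2 q.1 (stn.pcY.u q.2)) = Set.univ := by
    have h2 : Set.range (fun q : n.M.X × CPZ.O => stn.tdW.mk2 q.1 (stn.pcY.u q.2))
        = Set.range (fun q : n.M.X × stn.OYc.X => stn.tdW.mk2 q.1 q.2) := by
      apply clspan_range_comp_surjective (fun q : n.M.X × stn.OYc.X => stn.tdW.mk2 q.1 q.2)
        (fun q : n.M.X × CPZ.O => ((q.1 : n.M.X), stn.pcY.u q.2))
      rintro ⟨nn, y⟩
      obtain ⟨R, rfl⟩ := stn.pcY.bij.2 y
      exact ⟨(nn, R), rfl⟩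
    rw [h2]
    have := stn.tdW.dense
    convert this using 2
  -- the maps κ mm : stn.W → stp.W
  have hκex : ∀ mm : m.M.X, ∃ Fm : stn.W.X →L[ℂ] stp.W.X,
      (∀ q : n.M.X × CPZ.O, Fm (stn.tdW.mk2 q.1 (stn.pcY.u q.2))
        = stp.tdW.mk2 (td.mk2 mm q.1) (stp.pcY.u q.2)) ∧
      (∀ χ, ‖Fm χ‖ ≤ Real.sqrt ‖stn.W.lmul (m.M.ip mm mm)‖ * ‖χ‖) := by
    intro mm
    apply Corr.ext_clm stn.W
      (fun q : n.M.X × CPZ.O => stn.tdW.mk2 q.1 (stn.pcY.u q.2))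
      (fun q : n.M.X × CPZ.O => stp.tdW.mk2 (td.mk2 mm q.1) (stp.pcY.u q.2))
      (Real.sqrt ‖stn.W.lmul (m.M.ip mm mm)‖) (Real.sqrt_nonneg _) hvκdense
    apply Corr.bound_of_op stn.W stp.W _ _ (stn.W.lmul (m.M.ip mm mm))
    rintro ⟨nn, R⟩ ⟨nn', R'⟩
    show stp.W.ip (stp.tdW.mk2 (td.mk2 mm nn) (stp.pcY.u R))
        (stp.tdW.mk2 (td.mk2 mm nn') (stp.pcY.u R'))
      = stn.W.ip (stn.tdW.mk2 nn (stn.pcY.u R))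
        (stn.W.lmul (m.M.ip mm mm) (stn.tdW.mk2 nn' (stn.pcY.u R')))
    rw [stp.tdW.ip_mk, td.ip_mk, stn.W.lmul_apply, stn.tdW.la_mk, stn.tdW.ip_mk,
      stp.pcY.la, stp.pcY.ip, stn.pcY.la, stn.pcY.ip]
  choose κ hκmk hκb using hκex
  -- pointwise inner-product identity for κ
  have hκip : ∀ (mm mm' : m.M.X) (χ χ' : stn.W.X),
      stp.W.ip (κ mm χ) (κ mm' χ')
        = stn.W.ip χ (stn.W.la (m.M.ip mm mm') χ') := by
    intro mm mm'
    have hgen : ∀ (q q' : n.M.X × CPZ.O),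
        stp.W.ip (κ mm (stn.tdW.mk2 q.1 (stn.pcY.u q.2)))
            (κ mm' (stn.tdW.mk2 q'.1 (stn.pcY.u q'.2)))
          = stn.W.ip (stn.tdW.mk2 q.1 (stn.pcY.u q.2))
            (stn.W.la (m.M.ip mm mm') (stn.tdW.mk2 q'.1 (stn.pcY.u q'.2))) := by
      rintro ⟨nn, R⟩ ⟨nn', R'⟩
      rw [hκmk mm (nn, R), hκmk mm' (nn', R')]
      show stp.W.ip (stp.tdW.mk2 (td.mk2 mm nn) (stp.pcY.u R))
          (stp.tdW.mk2 (td.mk2 mm' nn') (stp.pcY.u R'))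
        = stn.W.ip (stn.tdW.mk2 nn (stn.pcY.u R))
          (stn.W.la (m.M.ip mm mm') (stn.tdW.mk2 nn' (stn.pcY.u R')))
      rw [stp.tdW.ip_mk, td.ip_mk, stn.tdW.la_mk, stn.tdW.ip_mk,
        stp.pcY.la, stp.pcY.ip, stn.pcY.la, stn.pcY.ip]
    -- extend to all χ' then all χ
    have inner : ∀ (q : n.M.X × CPZ.O), ∀ χ',
        stp.W.ip (κ mm (stn.tdW.mk2 q.1 (stn.pcY.u q.2))) (κ mm' χ')
          = stn.W.ip (stn.tdW.mk2 q.1 (stn.pcY.u q.2)) (stn.W.la (m.M.ip mm mm') χ') := by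
      intro q
      apply eq_of_clspan hvκdense (fun c => c)
      · exact (stp.W.continuous_ip_right _).comp (κ mm').continuous
      · exact (stn.W.continuous_ip_right _).comp (stn.W.lmul (m.M.ip mm mm')).continuous
      · intro x y; simp only [map_add, stp.W.ip_add, stn.W.ip_add, stn.W.la_add]
      · intro x y; simp only [map_add, stp.W.ip_add, stn.W.ip_add, stn.W.la_add]
      · intro c x; simp only [map_smul, stp.W.ip_smul, stn.W.ip_smul, stn.W.la_smul]
      · intro c x; simp only [map_smul, stp.W.ip_smul, stn.W.ip_smul, stn.W.la_smul]
      · rintro _ ⟨q', rfl⟩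
        exact hgen q q'
    intro χ χ'
    revert χ
    apply eq_of_clspan hvκdense (fun c => starRingEnd ℂ c)
    · exact (stp.W.continuous_ip_left _).comp (κ mm).continuous
    · exact stn.W.continuous_ip_left _
    · intro x y; simp only [map_add, stp.W.ip_add_left, stn.W.ip_add_left]
    · intro x y; simp only [stn.W.ip_add_left]
    · intro c x; simp only [map_smul, stp.W.ip_smul_left, stn.W.ip_smul_left]
    · intro c x; simp only [stn.W.ip_smul_left]
    · rintro _ ⟨q, rfl⟩
      exact inner q χ'
  -- κ intertwines the left action of A
  have hκla : ∀ (a : A) (mm : m.M.X) (χ : stn.W.X),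
      stp.W.la a (κ mm χ) = κ (m.M.la a mm) χ := by
    intro a mm
    have h := clm_eq_of_clspan hvκdense ((stp.W.lmul a).comp (κ mm)) (κ (m.M.la a mm)) (by
      rintro _ ⟨⟨nn, R⟩, rfl⟩
      simp only [ContinuousLinearMap.comp_apply]
      rw [hκmk mm (nn, R), hκmk (m.M.la a mm) (nn, R)]
      show stp.W.la a (stp.tdW.mk2 (td.mk2 mm nn) (stp.pcY.u R))
        = stp.tdW.mk2 (td.mk2 (m.M.la a mm) nn) (stp.pcY.u R)
      rw [stp.tdW.la_mk, td.la_mk])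
    intro χ
    exact DFunLike.congr_fun h χ
  -- bound for κ in terms of ‖mm‖
  have hκb' : ∀ (mm : m.M.X) (χ : stn.W.X), ‖κ mm χ‖ ≤ ‖mm‖ * ‖χ‖ := by
    intro mm χ
    refine (hκb mm χ).trans (mul_le_mul_of_nonneg_right ?_ (norm_nonneg _))
    have h1 : ‖stn.W.lmul (m.M.ip mm mm)‖ ≤ ‖mm‖ ^ 2 := by
      have h2 : ‖stn.W.lmul (m.M.ip mm mm)‖ ≤ ‖m.M.ip mm mm‖ := by
        apply ContinuousLinearMap.opNorm_le_bound _ (norm_nonneg _)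
        intro χ'
        exact stn.W.la_bound _ _
      exact h2.trans (by rw [sq]; exact m.M.ip_bound mm mm)
    calc Real.sqrt ‖stn.W.lmul (m.M.ip mm mm)‖ ≤ Real.sqrt (‖mm‖ ^ 2) :=
          Real.sqrt_le_sqrt h1
      _ = ‖mm‖ := Real.sqrt_sq (norm_nonneg _)
  -- density of the elementary family in m.TMY and n.TMY
  have hv₃dense : clspan (Set.range fun q : m.M.X × F.X => m.tdMY.mk2 q.1 q.2)
      = Set.univ := by
    have := m.tdMY.dense
    convert this using 2
  have hv₄dense : clspan (Set.range fun q : n.M.X × G.X => n.tdMY.mk2 q.1 q.2)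
      = Set.univ := by
    have := n.tdMY.dense
    convert this using 2
  -- the maps Ψ χ : m.TMY → stp.W
  have hΨex : ∀ χ : stn.W.X, ∃ Pc : m.TMY.X →L[ℂ] stp.W.X,
      (∀ q : m.M.X × F.X, Pc (m.tdMY.mk2 q.1 q.2) = κ q.1 (sdn.σ (CPY.rep.t q.2) χ)) ∧
      (∀ ζ, ‖Pc ζ‖ ≤ Real.sqrt (‖χ‖^2) * ‖ζ‖) := by
    intro χ
    apply Corr.ext_clm m.TMY
      (fun q : m.M.X × F.X => m.tdMY.mk2 q.1 q.2)
      (fun q : m.M.X × F.X => κ q.1 (sdn.σ (CPY.rep.t q.2) χ))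
      (Real.sqrt (‖χ‖^2)) (Real.sqrt_nonneg _) hv₃dense
    apply Corr.bound_of_dom m.TMY stp.W _ _
      (fun e : B => stn.W.ip χ (stn.W.la e χ)) (‖χ‖^2) (by positivity)
      (fun e e' => by simp only [stn.W.la_add', stn.W.ip_add])
      (fun c e => by simp only [stn.W.la_smul', stn.W.ip_smul])
      (fun e => by
        show ‖stn.W.ip χ (stn.W.la e χ)‖ ≤ ‖χ‖^2 * ‖e‖
        calc ‖stn.W.ip χ (stn.W.la e χ)‖ ≤ ‖χ‖ * ‖stn.W.la e χ‖ := stn.W.ip_bound _ _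
          _ ≤ ‖χ‖ * (‖e‖ * ‖χ‖) :=
              mul_le_mul_of_nonneg_left (stn.W.la_bound _ _) (norm_nonneg _)
          _ = ‖χ‖^2 * ‖e‖ := by ring)
    rintro ⟨mm, y⟩ ⟨mm', y'⟩
    show stp.W.ip (κ mm (sdn.σ (CPY.rep.t y) χ)) (κ mm' (sdn.σ (CPY.rep.t y') χ))
      = stn.W.ip χ (stn.W.la (m.TMY.ip (m.tdMY.mk2 mm y) (m.tdMY.mk2 mm' y')) χ)
    rw [hκip mm mm']
    rw [show stn.W.la (m.M.ip mm mm') (sdn.σ (CPY.rep.t y') χ)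
        = sdn.σ (CPY.rep.π (m.M.ip mm mm')) (sdn.σ (CPY.rep.t y') χ) from by
      rw [sdn.σ_π]; rfl]
    rw [sdn.σ_star (CPY.rep.t y) χ _]
    rw [show sdn.σ (star (CPY.rep.t y))
          ((sdn.σ (CPY.rep.π (m.M.ip mm mm'))) ((sdn.σ (CPY.rep.t y')) χ))
        = sdn.σ (star (CPY.rep.t y) * (CPY.rep.π (m.M.ip mm mm') * CPY.rep.t y')) χ from by
      rw [sdn.σ_mul, sdn.σ_mul]; rfl]
    rw [CPY.rep.mul_t, CPY.rep.t_mul]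
    rw [m.tdMY.ip_mk]
    rw [sdn.σ_π]
    rfl
  choose Ψ hΨmk hΨb using hΨex
  have hΨb' : ∀ (χ : stn.W.X) (ζ : m.TMY.X), ‖Ψ χ ζ‖ ≤ ‖χ‖ * ‖ζ‖ := by
    intro χ ζ
    have := hΨb χ ζ
    rwa [Real.sqrt_sq (norm_nonneg _)] at this
  -- linearity of Ψ in χ
  have hΨadd : ∀ (χ χ' : stn.W.X) (ζ : m.TMY.X), Ψ (χ + χ') ζ = Ψ χ ζ + Ψ χ' ζ := by
    intro χ χ'
    have h := clm_eq_of_clspan hv₃dense (Ψ (χ + χ')) (Ψ χ + Ψ χ') (by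
      rintro _ ⟨⟨mm, y⟩, rfl⟩
      rw [ContinuousLinearMap.add_apply, hΨmk _ (mm, y), hΨmk _ (mm, y), hΨmk _ (mm, y),
        map_add, map_add])
    intro ζ
    rw [h]; rfl
  have hΨsmul : ∀ (c : ℂ) (χ : stn.W.X) (ζ : m.TMY.X), Ψ (c • χ) ζ = c • Ψ χ ζ := by
    intro c χ
    have h := clm_eq_of_clspan hv₃dense (Ψ (c • χ)) (c • Ψ χ) (by
      rintro _ ⟨⟨mm, y⟩, rfl⟩
      rw [ContinuousLinearMap.smul_apply, hΨmk _ (mm, y), hΨmk _ (mm, y),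
        map_smul, map_smul])
    intro ζ
    rw [h]; rfl
  have hΨcont : ∀ ζ : m.TMY.X, Continuous (fun χ : stn.W.X => Ψ χ ζ) := by
    intro ζ
    have hc := (LinearMap.mkContinuous
      ({ toFun := fun χ : stn.W.X => Ψ χ ζ
         map_add' := fun χ χ' => hΨadd χ χ' ζ
         map_smul' := fun c χ => hΨsmul c χ ζ } : stn.W.X →ₗ[ℂ] stp.W.X) ‖ζ‖
      (fun χ => by
        show ‖Ψ χ ζ‖ ≤ ‖ζ‖ * ‖χ‖
        rw [mul_comm]; exact hΨb' χ ζ)).continuous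
    exact hc
  -- Λ and Ξ are compatible with κ
  have hE : ∀ (mm' : m.M.X) (R : CPZ.O) (ω : n.TMY.X),
      stp.Λ (Ξ mm' ω) R = κ mm' (stn.Λ ω R) := by
    intro mm' R
    apply eq_of_clspan hv₄dense (fun c => c)
    · exact (stp.Λ_cont R).comp (hΞlin mm').2.2
    · exact (κ mm').continuous.comp (stn.Λ_cont R)
    · intro x y; simp only [(hΞlin mm').1, stp.Λ_add R]
    · intro x y; simp only [stn.Λ_add R, map_add]
    · intro c x; simp only [(hΞlin mm').2.1, stp.Λ_smul R]
    · intro c x; simp only [stn.Λ_smul R, map_smul]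
    · rintro _ ⟨⟨nn, z⟩, rfl⟩
      show stp.Λ (Ξ mm' (n.tdMY.mk2 nn z)) R = κ mm' (stn.Λ (n.tdMY.mk2 nn z) R)
      rw [hΞmk, stp.Λ_mk, stn.Λ_mk, hκmk mm' (nn, CPZ.rep.t z * R)]
  -- Ψ at elementary χ
  have hE2 : ∀ (nn : n.M.X) (R : CPZ.O) (ζ : m.TMY.X),
      Ψ (stn.tdW.mk2 nn (stn.pcY.u R)) ζ = stp.Λ (Θ ζ nn) R := by
    intro nn R
    apply eq_of_clspan hv₃dense (fun c => c)
    · exact (Ψ _).continuous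
    · exact (stp.Λ_cont R).comp (hΘlin nn).2.2
    · intro x y; simp only [map_add]
    · intro x y; simp only [(hΘlin nn).1, stp.Λ_add R]
    · intro c x; simp only [map_smul]
    · intro c x; simp only [(hΘlin nn).2.1, stp.Λ_smul R]
    · rintro _ ⟨⟨mm', y⟩, rfl⟩
      show Ψ (stn.tdW.mk2 nn (stn.pcY.u R)) (m.tdMY.mk2 mm' y)
        = stp.Λ (Θ (m.tdMY.mk2 mm' y) nn) R
      rw [hΨmk _ (mm', y), sdn.σ_t, stn.Φ_mk, hΘmk, hE]
  -- the key compatibility of Φ_p with κ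
  have hD : ∀ (x : E.X) (mm : m.M.X) (χ : stn.W.X),
      stp.Φ x (κ mm χ) = Ψ χ (m.U.toFun (m.tdXM.mk2 x mm)) := by
    intro x mm
    apply eq_of_clspan hvκdense (fun c => c)
    · exact (stp.Φ x).continuous.comp (κ mm).continuous
    · exact hΨcont (m.U.toFun (m.tdXM.mk2 x mm))
    · intro χ χ'; simp only [map_add]
    · intro χ χ'; simp only [hΨadd]
    · intro c χ; simp only [map_smul]
    · intro c χ; simp only [hΨsmul]
    · rintro _ ⟨⟨nn, R⟩, rfl⟩
      show stp.Φ x (κ mm (stn.tdW.mk2 nn (stn.pcY.u R)))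
        = Ψ (stn.tdW.mk2 nn (stn.pcY.u R)) (m.U.toFun (m.tdXM.mk2 x mm))
      rw [hκmk mm (nn, R), stp.Φ_mk, hU, hE2]
  -- spanning family of T and target values in V
  set vvec : (m.M.X × CPY.O) × stn.W.X → T.X :=
    fun q => tdT.mk2 (rc₁.w (stm.tdW.mk2 q.1.1 (stm.pcY.u q.1.2))) (rc₂.w q.2) with hvvec
  set gvec : (m.M.X × CPY.O) × stn.W.X → V.X :=
    fun q => rcV.w (κ q.1.1 (sdn.σ q.1.2 q.2)) with hgvec
  have hipT : ∀ i j, V.ip (gvec i) (gvec j) = T.ip (vvec i) (vvec j) := by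
    rintro ⟨⟨mm, S⟩, χ⟩ ⟨⟨mm', S'⟩, χ'⟩
    show V.ip (rcV.w (κ mm (sdn.σ S χ))) (rcV.w (κ mm' (sdn.σ S' χ')))
      = T.ip (tdT.mk2 (rc₁.w (stm.tdW.mk2 mm (stm.pcY.u S))) (rc₂.w χ))
          (tdT.mk2 (rc₁.w (stm.tdW.mk2 mm' (stm.pcY.u S'))) (rc₂.w χ'))
    rw [rcV.ip_eq, hκip mm mm']
    rw [tdT.ip_mk, rc₁.ip_eq, stm.tdW.ip_mk, stm.pcY.la, stm.pcY.ip, rc₂.la_eq, rc₂.ip_eq]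
    rw [show sdn.σ (star S * (CPY.rep.π (m.M.ip mm mm') * S')) χ'
        = sdn.σ (star S) (sdn.σ (CPY.rep.π (m.M.ip mm mm')) (sdn.σ S' χ')) from by
      rw [sdn.σ_mul, sdn.σ_mul]; rfl]
    rw [← sdn.σ_star S χ _]
    rw [sdn.σ_π]
    rfl
  -- density of the spanning family in T
  have hW₁dense : clspan (Set.range fun r : m.M.X × CPY.O =>
      rc₁.w (stm.tdW.mk2 r.1 (stm.pcY.u r.2))) = Set.univ := by
    have h2 : Set.range (fun r : m.M.X × CPY.O => stm.tdW.mk2 r.1 (stm.pcY.u r.2))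
        = Set.range (fun q : m.M.X × stm.OYc.X => stm.tdW.mk2 q.1 q.2) := by
      apply clspan_range_comp_surjective (fun q : m.M.X × stm.OYc.X => stm.tdW.mk2 q.1 q.2)
        (fun r : m.M.X × CPY.O => ((r.1 : m.M.X), stm.pcY.u r.2))
      rintro ⟨mm, y⟩
      obtain ⟨S, rfl⟩ := stm.pcY.bij.2 y
      exact ⟨(mm, S), rfl⟩
    have h3 : Set.range (fun r : m.M.X × CPY.O => rc₁.w (stm.tdW.mk2 r.1 (stm.pcY.u r.2)))
        = rc₁.wCLM '' Set.range (fun r : m.M.X × CPY.O =>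
            stm.tdW.mk2 r.1 (stm.pcY.u r.2)) := by
      rw [← Set.range_comp]
      rfl
    rw [h3]
    apply clspan_image rc₁.wCLM
    · intro y; obtain ⟨ξ, rfl⟩ := rc₁.bij.2 y; exact ⟨ξ, rfl⟩
    · rw [h2]
      have := stm.tdW.dense
      convert this using 2
  have hTdense : clspan (Set.range vvec) = Set.univ := by
    have h1 := tdT.clspan_left (κ := m.M.X × CPY.O)
      (fun r => rc₁.w (stm.tdW.mk2 r.1 (stm.pcY.u r.2))) hW₁dense
    have h2 : Set.range vvec = Set.range (fun pr : (m.M.X × CPY.O) × W₂.X =>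
        tdT.mk2 (rc₁.w (stm.tdW.mk2 pr.1.1 (stm.pcY.u pr.1.2))) pr.2) := by
      apply clspan_range_comp_surjective
        (fun pr : (m.M.X × CPY.O) × W₂.X =>
          tdT.mk2 (rc₁.w (stm.tdW.mk2 pr.1.1 (stm.pcY.u pr.1.2))) pr.2)
        (fun q : (m.M.X × CPY.O) × stn.W.X => (q.1, rc₂.w q.2))
      rintro ⟨r, η⟩
      obtain ⟨χ, rfl⟩ := rc₂.bij.2 η
      exact ⟨(r, χ), rfl⟩
    rw [h2]
    convert h1 using 2
  -- the continuous linear map T → V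
  obtain ⟨Fc, hFc, _hFcb⟩ := Corr.ext_clm T vvec gvec 1 one_pos.le hTdense (by
    have hb := Corr.bound_of_dom T V vvec gvec (fun x => x) 1 one_pos.le
      (fun _ _ => rfl) (fun _ _ => rfl) (fun x => by rw [one_mul]) hipT
    intro s c
    have h := hb s c
    rwa [Real.sqrt_one] at h)
  have hFraw : ∀ (mm : m.M.X) (S : CPY.O) (χ : stn.W.X),
      Fc (tdT.mk2 (rc₁.w (stm.tdW.mk2 mm (stm.pcY.u S))) (rc₂.w χ))
        = rcV.w (κ mm (sdn.σ S χ)) := fun mm S χ => hFc ((mm, S), χ)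
  -- map_ip
  have hmapip : ∀ x y, V.ip (Fc x) (Fc y) = T.ip x y := by
    have inner : ∀ i, ∀ x, V.ip (Fc x) (gvec i) = T.ip x (vvec i) := by
      intro i
      apply eq_of_clspan hTdense (fun c => starRingEnd ℂ c)
      · exact (V.continuous_ip_left (gvec i)).comp Fc.continuous
      · exact T.continuous_ip_left (vvec i)
      · intro x y; simp only [map_add, V.ip_add_left]
      · intro x y; simp only [T.ip_add_left]
      · intro c x; simp only [map_smul, V.ip_smul_left]
      · intro c x; simp only [T.ip_smul_left]
      · rintro _ ⟨j, rfl⟩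
        show V.ip (Fc (vvec j)) (gvec i) = T.ip (vvec j) (vvec i)
        rw [hFc j]
        exact hipT j i
    intro x
    apply eq_of_clspan hTdense (fun c => c)
    · exact (V.continuous_ip_right (Fc x)).comp Fc.continuous
    · exact T.continuous_ip_right x
    · intro y z; simp only [map_add, V.ip_add]
    · intro y z; simp only [T.ip_add]
    · intro c y; simp only [map_smul, V.ip_smul]
    · intro c y; simp only [T.ip_smul]
    · rintro _ ⟨i, rfl⟩
      show V.ip (Fc x) (Fc (vvec i)) = T.ip x (vvec i)
      rw [hFc i]
      exact inner i x
  -- dense range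
  have hgdense : clspan (Set.range gvec) = Set.univ := by
    have hstep1 : ∀ (mm : m.M.X) (χ : stn.W.X), rcV.w (κ mm χ) ∈ clspan (Set.range gvec) := by
      intro mm
      refine forall_mem_of_clspan stn.W.nondeg
        ((clspan_isClosed _).preimage (rcV.w_continuous.comp (κ mm).continuous)) ?_ ?_ ?_ ?_
      · show rcV.w (κ mm 0) ∈ clspan (Set.range gvec)
        rw [map_zero, show rcV.w (0 : stp.W.X) = 0 from map_zero rcV.wCLM]
        exact clspan_zero_mem _
      · intro x hx y hy
        show rcV.w (κ mm (x + y)) ∈ clspan (Set.range gvec)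
        rw [map_add, rcV.add]
        exact clspan_add_mem hx hy
      · intro c x hx
        show rcV.w (κ mm (c • x)) ∈ clspan (Set.range gvec)
        rw [map_smul, rcV.smul]
        exact clspan_smul_mem c hx
      · rintro _ ⟨b, η, rfl⟩
        show rcV.w (κ mm (stn.W.la b η)) ∈ clspan (Set.range gvec)
        rw [show stn.W.la b η = sdn.σ (CPY.rep.π b) η from by rw [sdn.σ_π]; rfl]
        exact clspan_self_subset _ ⟨((mm, CPY.rep.π b), η), rfl⟩
    have htddense : clspan (Set.range fun q : m.M.X × n.M.X => td.mk2 q.1 q.2)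
        = Set.univ := by
      have := td.dense
      convert this using 2
    have hstep2 : ∀ (P : p.M.X) (R : CPZ.O),
        rcV.w (stp.tdW.mk2 P (stp.pcY.u R)) ∈ clspan (Set.range gvec) := by
      intro P R
      revert P
      refine forall_mem_of_clspan htddense
        ((clspan_isClosed _).preimage (rcV.w_continuous.comp
          (stp.tdW.mk2l (stp.pcY.u R)).continuous)) ?_ ?_ ?_ ?_
      · show rcV.w (stp.tdW.mk2 0 (stp.pcY.u R)) ∈ clspan (Set.range gvec)
        rw [stp.tdW.mk2_zero_left, show rcV.w (0 : stp.W.X) = 0 from map_zero rcV.wCLM]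
        exact clspan_zero_mem _
      · intro x hx y hy
        show rcV.w (stp.tdW.mk2 (x + y) (stp.pcY.u R)) ∈ clspan (Set.range gvec)
        rw [stp.tdW.add_l, rcV.add]
        exact clspan_add_mem hx hy
      · intro c x hx
        show rcV.w (stp.tdW.mk2 (c • x) (stp.pcY.u R)) ∈ clspan (Set.range gvec)
        rw [stp.tdW.smul_l, rcV.smul]
        exact clspan_smul_mem c hx
      · rintro _ ⟨⟨mm, nn⟩, rfl⟩
        show rcV.w (stp.tdW.mk2 (td.mk2 mm nn) (stp.pcY.u R)) ∈ clspan (Set.range gvec)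
        rw [← hκmk mm (nn, R)]
        exact hstep1 mm _
    have hstep3 : {ξ : stp.W.X | rcV.w ξ ∈ clspan (Set.range gvec)} = Set.univ := by
      apply stp.tdW.univ_of_mem
      · exact (clspan_isClosed _).preimage rcV.w_continuous
      · show rcV.w (0 : stp.W.X) ∈ clspan (Set.range gvec)
        rw [show rcV.w (0 : stp.W.X) = 0 from map_zero rcV.wCLM]
        exact clspan_zero_mem _
      · intro x hx y hy
        show rcV.w (x + y) ∈ clspan (Set.range gvec)
        rw [rcV.add]; exact clspan_add_mem hx hy
      · intro c x hx
        show rcV.w (c • x) ∈ clspan (Set.range gvec)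
        rw [rcV.smul]; exact clspan_smul_mem c hx
      · intro P ω
        obtain ⟨R, rfl⟩ := stp.pcY.bij.2 ω
        exact hstep2 P R
    apply Set.eq_univ_of_univ_subset
    intro z _
    obtain ⟨ξ, rfl⟩ := rcV.bij.2 z
    have : ξ ∈ {ξ : stp.W.X | rcV.w ξ ∈ clspan (Set.range gvec)} := by
      rw [hstep3]; exact Set.mem_univ ξ
    exact this
  have hdenseF : DenseRange Fc := by
    rw [denseRange_iff_closure_range]
    apply Set.eq_univ_of_univ_subset
    rw [← hgdense]
    have hle : Submodule.span ℂ (Set.range gvec) ≤ LinearMap.range (Fc : T.X →ₗ[ℂ] V.X) :=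
      Submodule.span_le.mpr (by rintro _ ⟨i, rfl⟩; exact ⟨vvec i, hFc i⟩)
    have hspan : ((Submodule.span ℂ (Set.range gvec) : Submodule ℂ V.X) : Set V.X)
        ⊆ Set.range Fc := by
      intro z hz
      obtain ⟨x, hx⟩ := hle hz
      exact ⟨x, hx⟩
    exact closure_mono hspan
  -- the good set for the left action
  set Good : Set CPX.O := {S : CPX.O | ∀ τ : T.X, Fc (T.la S τ) = V.la S (Fc τ)}
    with hGood
  have hGoodClosed : IsClosed Good := by
    have h0 : Good = ⋂ τ : T.X, {S : CPX.O | Fc (T.la S τ) = V.la S (Fc τ)} := by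
      ext S; simp [hGood, Set.mem_iInter]
    rw [h0]
    apply isClosed_iInter
    intro τ
    apply isClosed_eq
    · exact Fc.continuous.comp (T.laCLM τ).continuous
    · exact (V.laCLM (Fc τ)).continuous
  have goodOf : ∀ S₀ : CPX.O,
      (∀ i, Fc (T.la S₀ (vvec i)) = V.la S₀ (Fc (vvec i))) → S₀ ∈ Good := by
    intro S₀ h
    show ∀ τ : T.X, Fc (T.la S₀ τ) = V.la S₀ (Fc τ)
    apply eq_of_clspan hTdense (fun c => c)
    · exact Fc.continuous.comp (T.lmul S₀).continuous
    · exact (V.lmul S₀).continuous.comp Fc.continuous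
    · intro x y; simp only [T.la_add, map_add]
    · intro x y; simp only [map_add, V.la_add]
    · intro c x; simp only [T.la_smul, map_smul]
    · intro c x; simp only [map_smul, V.la_smul]
    · rintro _ ⟨i, rfl⟩; exact h i
  -- the key lemma relating Λ_m and Ψ through Fc
  have hL : ∀ (S : CPY.O) (χ : stn.W.X) (ζ : m.TMY.X),
      Fc (tdT.mk2 (rc₁.w (stm.Λ ζ S)) (rc₂.w χ)) = rcV.w (Ψ (sdn.σ S χ) ζ) := by
    intro S χ
    apply eq_of_clspan hv₃dense (fun c => c)
    · exact Fc.continuous.comp ((tdT.mk2l (rc₂.w χ)).continuous.comp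
        (rc₁.w_continuous.comp (stm.Λ_cont S)))
    · exact rcV.w_continuous.comp (Ψ (sdn.σ S χ)).continuous
    · intro x y; simp only [stm.Λ_add S, rc₁.add, tdT.add_l, map_add]
    · intro x y; simp only [map_add, rcV.add]
    · intro c x; simp only [stm.Λ_smul S, rc₁.smul, tdT.smul_l, map_smul]
    · intro c x; simp only [map_smul, rcV.smul]
    · rintro _ ⟨⟨mm', y⟩, rfl⟩
      show Fc (tdT.mk2 (rc₁.w (stm.Λ (m.tdMY.mk2 mm' y) S)) (rc₂.w χ))
        = rcV.w (Ψ (sdn.σ S χ) (m.tdMY.mk2 mm' y))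
      rw [stm.Λ_mk, hFraw mm' (CPY.rep.t y * S) χ, hΨmk _ (mm', y)]
      rw [show sdn.σ (CPY.rep.t y * S) χ = sdn.σ (CPY.rep.t y) (sdn.σ S χ) from by
        rw [sdn.σ_mul]; rfl]
  -- base case π
  have hπGood : ∀ a : A, CPX.rep.π a ∈ Good := by
    intro a
    apply goodOf
    rintro ⟨⟨mm, S⟩, χ⟩
    show Fc (T.la (CPX.rep.π a)
        (tdT.mk2 (rc₁.w (stm.tdW.mk2 mm (stm.pcY.u S))) (rc₂.w χ)))
      = V.la (CPX.rep.π a)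
        (Fc (tdT.mk2 (rc₁.w (stm.tdW.mk2 mm (stm.pcY.u S))) (rc₂.w χ)))
    rw [tdT.la_mk, rc₁.la_eq, sdm.σ_π, stm.W.lmul_apply, stm.tdW.la_mk,
      hFraw (m.M.la a mm) S χ, hFraw mm S χ, rcV.la_eq, sdp.σ_π, stp.W.lmul_apply, hκla]
  -- base case t
  have htGood : ∀ x : E.X, CPX.rep.t x ∈ Good := by
    intro x
    apply goodOf
    rintro ⟨⟨mm, S⟩, χ⟩
    show Fc (T.la (CPX.rep.t x)
        (tdT.mk2 (rc₁.w (stm.tdW.mk2 mm (stm.pcY.u S))) (rc₂.w χ)))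
      = V.la (CPX.rep.t x)
        (Fc (tdT.mk2 (rc₁.w (stm.tdW.mk2 mm (stm.pcY.u S))) (rc₂.w χ)))
    rw [tdT.la_mk, rc₁.la_eq, sdm.σ_t, stm.Φ_mk,
      hL S χ (m.U.toFun (m.tdXM.mk2 x mm)), hFraw mm S χ, rcV.la_eq, sdp.σ_t,
      hD x mm (sdn.σ S χ)]
  -- algebraic closure properties
  have hZero : (0 : CPX.O) ∈ Good := by
    intro τ
    rw [T.la_zero_left, map_zero, V.la_zero_left]
  have hAdd : ∀ S T' : CPX.O, S ∈ Good → T' ∈ Good → S + T' ∈ Good := by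
    intro S T' hS hT τ
    rw [T.la_add', map_add, hS τ, hT τ, V.la_add']
  have hSmul : ∀ (c : ℂ) (S : CPX.O), S ∈ Good → c • S ∈ Good := by
    intro c S hS τ
    rw [T.la_smul', map_smul, hS τ, V.la_smul']
  have hMul : ∀ S T' : CPX.O, S ∈ Good → T' ∈ Good → S * T' ∈ Good := by
    intro S T' hS hT τ
    rw [T.la_mul, hS _, hT τ, ← V.la_mul]
  have hStar : ∀ S : CPX.O, S ∈ Good → star S ∈ Good := by
    intro S hS τ
    apply V.ext_of_ip
    apply eq_of_clspan hgdense (fun c => starRingEnd ℂ c)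
    · exact V.continuous_ip_left _
    · exact V.continuous_ip_left _
    · intro y z; simp only [V.ip_add_left]
    · intro y z; simp only [V.ip_add_left]
    · intro c y; simp only [V.ip_smul_left]
    · intro c y; simp only [V.ip_smul_left]
    rintro _ ⟨i, rfl⟩
    rw [← hFc i]
    calc V.ip (Fc (vvec i)) (Fc (T.la (star S) τ))
        = T.ip (vvec i) (T.la (star S) τ) := hmapip _ _
      _ = T.ip (T.la S (vvec i)) τ := (T.la_adj S (vvec i) τ).symm
      _ = V.ip (Fc (T.la S (vvec i))) (Fc τ) := (hmapip _ _).symm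
      _ = V.ip (V.la S (Fc (vvec i))) (Fc τ) := by rw [hS (vvec i)]
      _ = V.ip (Fc (vvec i)) (V.la (star S) (Fc τ)) := V.la_adj S _ _
  have hGoodAll : ∀ S : CPX.O, S ∈ Good := by
    have hadj : ∀ z ∈ (NonUnitalStarAlgebra.adjoin ℂ
        (Set.range CPX.rep.π ∪ Set.range CPX.rep.t) :
          NonUnitalStarSubalgebra ℂ CPX.O), z ∈ Good := by
      intro z hz
      induction hz using NonUnitalStarAlgebra.adjoin_induction with
      | mem x hx =>
        rcases hx with hx | hx
        · obtain ⟨a, rfl⟩ := hx; exact hπGood a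
        · obtain ⟨y, rfl⟩ := hx; exact htGood y
      | add x y hx hy ihx ihy => exact hAdd x y ihx ihy
      | zero => exact hZero
      | mul x y hx hy ihx ihy => exact hMul x y ihx ihy
      | smul c x hx ihx => exact hSmul c x ihx
      | star x hx ihx => exact hStar x ihx
    intro S
    have h2 : (Set.univ : Set CPX.O) ⊆ Good := by
      rw [← CPX.generates.closure_eq]
      exact hGoodClosed.closure_subset_iff.mpr hadj
    exact h2 (Set.mem_univ S)
  exact Corr.iso_of_clm T V Fc hmapip (fun r x => hGoodAll r x) hdenseF


end Part1

end

noncomputable section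

universe u

/-- The assignments `X ↦ O_X` and `[M, U_M] ↦ [M ⊗_B O_Y]` (with the
left `O_X`-action through the induced homomorphism `σ`) define a functor from `ECCor`
to the enchilada category: for composable morphisms `[M, U_M] : X → Y`, `[N, U_N] : Y → Z`
there is an isomorphism of `O_X–O_Z` correspondences
`(M ⊗_B O_Y) ⊗_{O_Y} (N ⊗_C O_Z) ≅ (M ⊗_B N) ⊗_C O_Z`, and the identity morphism
`[A, U_A]` on `X` is sent to the class of the identity correspondence `O_X`. -/
theorem enchilada_functor :
    -- compatibility with composition
    (∀ (A B C : Type u) [NonUnitalCStarAlgebra A] [NonUnitalCStarAlgebra B]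
        [NonUnitalCStarAlgebra C]
        (E : Corr A A) (F : Corr B B) (G : Corr C C)
        (m : EMor E F) (n : EMor F G) (p : EMor E G), EIsComposite m n p →
      ∀ (CPX : CuntzPimsner E) (CPY : CuntzPimsner F) (CPZ : CuntzPimsner G)
        (stm : CCovSetup m CPY) (sdm : SigmaData stm CPX)
        (stn : CCovSetup n CPZ) (sdn : SigmaData stn CPY)
        (stp : CCovSetup p CPZ) (sdp : SigmaData stp CPX)
        -- M ⊗_B O_Y as an O_X–O_Y correspondence
        (W₁ : Corr CPX.O CPY.O) (_ : ReCorr stm.W sdm.σ W₁)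
        -- N ⊗_C O_Z as an O_Y–O_Z correspondence
        (W₂ : Corr CPY.O CPZ.O) (_ : ReCorr stn.W sdn.σ W₂)
        -- (M ⊗_B N) ⊗_C O_Z as an O_X–O_Z correspondence
        (V : Corr CPX.O CPZ.O) (_ : ReCorr stp.W sdp.σ V)
        -- the balanced tensor product (M ⊗_B O_Y) ⊗_{O_Y} (N ⊗_C O_Z)
        (T : Corr CPX.O CPZ.O) (_ : TensorData W₁ W₂ T),
      Nonempty (CorrIso T V)) ∧
    -- the identity morphism is sent to the identity correspondence
    (∀ (A : Type u) [NonUnitalCStarAlgebra A] (E : Corr A A)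
        (e : EMor E E), EIsIdentity e →
      ∀ (CPX : CuntzPimsner E)
        (ste : CCovSetup e CPX) (sde : SigmaData ste CPX)
        -- A ⊗_A O_X as an O_X–O_X correspondence
        (We : Corr CPX.O CPX.O) (_ : ReCorr ste.W sde.σ We)
        -- the identity correspondence O_X
        (OXid : Corr CPX.O CPX.O) (_ : PullCorr (fun S : CPX.O => S) OXid),
      Nonempty (CorrIso We OXid)) := by
  constructor
  · intro A B C _ _ _ E F G m n p hcomp CPX CPY CPZ stm sdm stn sdn stp sdp
      W₁ rc₁ W₂ rc₂ V rcV T tdT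
    exact part1_iso E F G m n p hcomp CPX CPY CPZ stm sdm stn sdn stp sdp
      W₁ rc₁ W₂ rc₂ V rcV T tdT
  · intro A _ E e hid CPX ste sde We rc OXid pc
    exact part2_iso E e hid CPX ste sde We rc OXid pc

end
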